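/- arXiv:math/0403499 — 3 statements merged into one kernel-verified Lean document; each statement's English description precedes it below -/
import Mathlib

section
/- Let (W_t)_{t≥0} be a standard real Brownian motion on a probability space. Let (τ_s)_{s≥0} be a family of nonnegative random variables such that for almost every sample point the map s ↦ τ_s is nondecreasing and continuous, and let (A_s)_{s≥0} be a real-valued stochastic process. Assume that almost surely on the event {lim_{s→∞} τ_s = +∞} one has liminf_{s→∞} A_s/τ_s > 0. Then almost surely on the event {lim_{s→∞} τ_s = +∞} one has lim_{s→∞} (W_{τ_s} + A_s) = +∞. -/
open MeasureTheory ProbabilityTheory Filter Real Topology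
open scoped ENNReal NNReal


lemma gauss_tail_aux {v : NNReal} (hv : v ≠ 0) {a m : ℝ} (s : Set ℝ)
    (hle : ∀ x ∈ s, a^2 + (x - m)^2 ≤ (x - 0)^2) :
    gaussianReal 0 v s ≤ ENNReal.ofReal (Real.exp (-a^2 / (2*v))) := by
  rw [gaussianReal_apply 0 hv]
  have key : ∀ x ∈ s, gaussianPDF 0 v x ≤
      ENNReal.ofReal (Real.exp (-a^2 / (2*v))) * gaussianPDF m v x := by
    intro x hx
    rw [gaussianPDF, gaussianPDF, ← ENNReal.ofReal_mul (Real.exp_nonneg _)]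
    apply ENNReal.ofReal_le_ofReal
    simp only [gaussianPDFReal]
    rw [show Real.exp (-a^2/(2*(v:ℝ))) * ((√(2 * π * v))⁻¹ * rexp (-(x-m)^2/(2*v))) =
      (√(2 * π * v))⁻¹ * (rexp (-a^2/(2*(v:ℝ))) * rexp (-(x-m)^2/(2*v))) by ring, ← Real.exp_add]
    have hC : (0:ℝ) ≤ (√(2 * π * v))⁻¹ := by positivity
    apply mul_le_mul_of_nonneg_left _ hC
    apply Real.exp_le_exp.mpr
    have hv0 : (0:ℝ) < (v:ℝ) := lt_of_le_of_ne v.coe_nonneg (by exact_mod_cast (Ne.symm hv))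
    have := hle x hx
    rw [← add_div, div_le_div_iff₀ (by positivity) (by positivity)]
    nlinarith [this]
  calc ∫⁻ x in s, gaussianPDF 0 v x
      ≤ ∫⁻ x in s, ENNReal.ofReal (Real.exp (-a^2 / (2*v))) * gaussianPDF m v x := by
        apply setLIntegral_mono ((measurable_gaussianPDF m v).const_mul _) key
    _ = ENNReal.ofReal (Real.exp (-a^2 / (2*v))) * ∫⁻ x in s, gaussianPDF m v x := by
        rw [lintegral_const_mul _ (measurable_gaussianPDF m v)]
    _ ≤ ENNReal.ofReal (Real.exp (-a^2 / (2*v))) * 1 := by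
        gcongr
        rw [← lintegral_gaussianPDF_eq_one m hv]
        exact setLIntegral_le_lintegral _ _
    _ = _ := mul_one _

lemma gauss_abs_tail {v : NNReal} (hv : v ≠ 0) {a : ℝ} (ha : 0 < a) :
    gaussianReal 0 v {x | a ≤ |x|} ≤ ENNReal.ofReal (2 * Real.exp (-a^2 / (2*v))) := by
  have hsub : {x : ℝ | a ≤ |x|} ⊆ Set.Iic (-a) ∪ Set.Ici a := by
    intro x hx
    rcases abs_cases x with ⟨h1, _⟩ | ⟨h1, _⟩
    · right; exact Set.mem_Ici.mpr (h1 ▸ hx)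
    · left; simp only [Set.mem_Iic]; linarith [Set.mem_setOf_eq ▸ hx, h1]
  calc gaussianReal 0 v {x | a ≤ |x|} ≤ gaussianReal 0 v (Set.Iic (-a) ∪ Set.Ici a) :=
        measure_mono hsub
    _ ≤ gaussianReal 0 v (Set.Iic (-a)) + gaussianReal 0 v (Set.Ici a) := measure_union_le _ _
    _ ≤ ENNReal.ofReal (Real.exp (-a^2 / (2*v))) + ENNReal.ofReal (Real.exp (-a^2 / (2*v))) := by
        gcongr
        · exact gauss_tail_aux hv (m := -a) _ (fun x hx => by simp only [Set.mem_Iic] at hx; nlinarith)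
        · exact gauss_tail_aux hv (m := a) _ (fun x hx => by simp only [Set.mem_Ici] at hx; nlinarith)
    _ = ENNReal.ofReal (2 * Real.exp (-a^2 / (2*v))) := by
        rw [← ENNReal.ofReal_add (Real.exp_nonneg _) (Real.exp_nonneg _)]; ring_nf

lemma integrable_id_gauss {v : NNReal} (hv : v ≠ 0) :
    Integrable (fun x : ℝ => x) (gaussianReal 0 v) := by
  have hv0 : (0:ℝ) < (v:ℝ) := lt_of_le_of_ne v.coe_nonneg (by exact_mod_cast (Ne.symm hv))
  rw [gaussianReal_of_var_ne_zero 0 hv,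
    integrable_withDensity_iff (measurable_gaussianPDF 0 v)
      (ae_of_all _ fun x => ENNReal.ofReal_lt_top)]
  have heq : (fun x : ℝ => x * (gaussianPDF 0 v x).toReal) =
      fun x => (√(2*π*v))⁻¹ * (x * Real.exp (-(1/(2*(v:ℝ))) * x^2)) := by
    funext x
    rw [gaussianPDF, ENNReal.toReal_ofReal (gaussianPDFReal_nonneg _ _ _), gaussianPDFReal]
    rw [show -(x - 0)^2/(2*(v:ℝ)) = -(1/(2*(v:ℝ))) * x^2 by ring]
    ring
  rw [heq]
  exact (integrable_mul_exp_neg_mul_sq (by positivity)).const_mul _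

lemma integral_id_gauss {v : NNReal} (hv : v ≠ 0) :
    ∫ x, x ∂(gaussianReal 0 v) = 0 := by
  have hmap : (gaussianReal 0 v).map (fun x => (-1 : ℝ) * x) = gaussianReal 0 v := by
    have := gaussianReal_map_const_mul (μ := 0) (v := v) (-1 : ℝ)
    simpa using this
  have h1 : ∫ x, x ∂(gaussianReal 0 v) = ∫ x, (-1 : ℝ) * x ∂(gaussianReal 0 v) := by
    conv_lhs => rw [← hmap]
    exact integral_map (by fun_prop) aestronglyMeasurable_id
  simp only [neg_mul, one_mul] at h1
  rw [integral_neg] at h1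
  linarith

lemma chain_dyadic (f : ℝ → ℝ) (n : ℕ) (a : ℕ → ℝ) (ha : ∀ m, 0 ≤ a m)
    (h : ∀ m k : ℕ, k < 2^m → |f ((n:ℝ) + (k+1)/2^m) - f ((n:ℝ) + k/2^m)| ≤ a m) :
    ∀ M : ℕ, ∀ k : ℕ, k ≤ 2^M → |f ((n:ℝ) + (k:ℝ)/2^M) - f (n:ℝ)| ≤ ∑ m ∈ Finset.range (M+1), a m := by
  intro M
  induction M with
  | zero =>
    intro k hk
    interval_cases k
    · simpa using ha 0
    · have := h 0 0 (by norm_num)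
      simpa using this
  | succ M ih =>
    intro k hk
    set j := k / 2 with hj
    have hj2 : j ≤ 2^M := by
      rw [hj]
      have : k / 2 ≤ 2^(M+1) / 2 := Nat.div_le_div_right hk
      simpa [pow_succ] using this
    have hbase := ih j hj2
    have hcast : ((j:ℝ))/2^M = ((2*j : ℕ):ℝ)/2^(M+1) := by
      push_cast
      rw [pow_succ]
      ring
    rcases Nat.even_or_odd k with ⟨l, hl⟩ | ⟨l, hl⟩
    · have hkj : k = 2 * j := by omega
      have : ((k:ℝ))/2^(M+1) = (j:ℝ)/2^M := by rw [hkj, ← hcast]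
      rw [this]
      calc |f ((n:ℝ) + (j:ℝ)/2^M) - f (n:ℝ)| ≤ ∑ m ∈ Finset.range (M+1), a m := hbase
        _ ≤ ∑ m ∈ Finset.range (M+1+1), a m := by
            rw [Finset.sum_range_succ a (M+1)]
            linarith [ha (M+1)]
    · have hkj : k = 2 * j + 1 := by omega
      have h2j : 2 * j < 2^(M+1) := by
        have : 2 * j + 1 ≤ 2^(M+1) := hkj ▸ hk
        omega
      have hstep := h (M+1) (2*j) h2j
      have hceq : ((2*j : ℕ):ℝ) + 1 = (k:ℝ) := by rw [hkj]; push_cast; ring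
      rw [hceq] at hstep
      calc |f ((n:ℝ) + (k:ℝ)/2^(M+1)) - f (n:ℝ)|
          ≤ |f ((n:ℝ) + (k:ℝ)/2^(M+1)) - f ((n:ℝ) + ((2*j:ℕ):ℝ)/2^(M+1))|
            + |f ((n:ℝ) + ((2*j:ℕ):ℝ)/2^(M+1)) - f (n:ℝ)| := abs_sub_le _ _ _
        _ ≤ a (M+1) + ∑ m ∈ Finset.range (M+1), a m := by
            apply add_le_add hstep
            rw [← hcast]
            exact hbase
        _ = ∑ m ∈ Finset.range (M+1+1), a m := by rw [Finset.sum_range_succ a (M+1)]; ring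

lemma dyadic_extend (f : ℝ → ℝ) (hf : Continuous f) (n : ℕ) (b : ℝ)
    (h : ∀ M : ℕ, ∀ k : ℕ, k ≤ 2^M → |f ((n:ℝ) + (k:ℝ)/2^M) - f (n:ℝ)| ≤ b) :
    ∀ t ∈ Set.Icc (n:ℝ) ((n:ℝ)+1), |f t - f (n:ℝ)| ≤ b := by
  intro t ht
  set x := t - (n:ℝ) with hx
  have hx0 : 0 ≤ x := by simp [hx]; linarith [ht.1]
  have hx1 : x ≤ 1 := by simp [hx]; linarith [ht.2]
  set q : ℕ → ℕ := fun M => ⌊x * 2^M⌋₊ with hq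
  have hqle : ∀ M, q M ≤ 2^M := by
    intro M
    have h1 : x * 2^M ≤ ((2^M : ℕ) : ℝ) := by
      push_cast
      nlinarith [pow_pos (by norm_num : (0:ℝ) < 2) M]
    calc q M ≤ ⌊((2^M : ℕ) : ℝ)⌋₊ := Nat.floor_mono h1
      _ = 2^M := Nat.floor_natCast _
  have htendsto : Tendsto (fun M : ℕ => (q M : ℝ)/2^M) atTop (𝓝 x) := by
    have hub : ∀ M : ℕ, (q M : ℝ)/2^M ≤ x := by
      intro M
      rw [div_le_iff₀ (by positivity)]
      exact Nat.floor_le (by positivity)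
    have hlb : ∀ M : ℕ, x - (1/2)^M ≤ (q M : ℝ)/2^M := by
      intro M
      have h2M : (0:ℝ) < 2^M := by positivity
      have hfl := Nat.lt_floor_add_one (x * 2^M)
      have h3 : (q M : ℝ) = (⌊x * 2^M⌋₊ : ℝ) := rfl
      have key : x * 2^M - 1 ≤ (q M : ℝ) := by rw [h3]; linarith [hfl]
      have heq : x - (1/2:ℝ)^M = (x * 2^M - 1)/2^M := by
        field_simp
        rw [sub_mul, div_pow, one_pow, div_mul_cancel₀ _ h2M.ne']
      rw [heq]
      gcongr
    have hlow : Tendsto (fun M : ℕ => x - (1/2:ℝ)^M) atTop (𝓝 x) := by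
      have := tendsto_pow_atTop_nhds_zero_of_lt_one (by norm_num : (0:ℝ) ≤ 1/2) (by norm_num)
      simpa using (tendsto_const_nhds (x := x)).sub this
    exact tendsto_of_tendsto_of_tendsto_of_le_of_le hlow tendsto_const_nhds hlb hub
  have hcomp : Tendsto (fun M : ℕ => |f ((n:ℝ) + (q M : ℝ)/2^M) - f (n:ℝ)|) atTop
      (𝓝 |f t - f (n:ℝ)|) := by
    have h1 : Tendsto (fun M : ℕ => (n:ℝ) + (q M : ℝ)/2^M) atTop (𝓝 t) := by
      have := (tendsto_const_nhds (x := (n:ℝ))).add htendsto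
      simpa [hx] using this
    exact ((hf.tendsto t).comp h1).sub tendsto_const_nhds |>.abs
  exact le_of_tendsto hcomp (Eventually.of_forall fun M => h M (q M) (hqle M))

lemma slln_nat {Ω : Type*} [MeasureSpace Ω] [IsProbabilityMeasure (ℙ : Measure Ω)]
    (W : ℝ → Ω → ℝ)
    (hW_meas : ∀ t : ℝ, Measurable (W t))
    (hW_zero : ∀ᵐ ω ∂(ℙ : Measure Ω), W 0 ω = 0)
    (hW_gauss : ∀ s t : ℝ, 0 ≤ s → s ≤ t →
      Measure.map (fun ω => W t ω - W s ω) ℙ = gaussianReal 0 (t - s).toNNReal)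
    (hW_indep : ∀ (n : ℕ) (t : ℕ → ℝ), (∀ i, 0 ≤ t i) → Monotone t →
      iIndepFun (m := fun _ : Fin n => (inferInstance : MeasurableSpace ℝ))
        (fun i : Fin n => fun ω => W (t (i + 1)) ω - W (t i) ω) ℙ) :
    ∀ᵐ ω ∂(ℙ : Measure Ω), Tendsto (fun n : ℕ => W n ω / n) atTop (𝓝 0) := by
  set X : ℕ → Ω → ℝ := fun i ω => W ((i : ℕ) + 1 : ℝ) ω - W ((i : ℕ) : ℝ) ω with hX
  have hXm : ∀ i, Measurable (X i) := fun i => (hW_meas _).sub (hW_meas _)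
  have hXmap : ∀ i : ℕ, Measure.map (X i) ℙ = gaussianReal 0 1 := by
    intro i
    have h1 : (((i:ℕ):ℝ) + 1 - ((i:ℕ):ℝ)) = 1 := by ring
    have := hW_gauss ((i:ℕ):ℝ) (((i:ℕ):ℝ) + 1) (Nat.cast_nonneg i) (by linarith)
    rw [h1] at this
    simpa using this
  have hint : Integrable (X 0) ℙ := by
    have := integrable_id_gauss (v := 1) one_ne_zero
    rw [← hXmap 0] at this
    exact (integrable_map_measure aestronglyMeasurable_id (hXm 0).aemeasurable).mp this
  have hindep : Pairwise (Function.onFun (IndepFun · · ℙ) X) := by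
    intro i j hij
    have h := hW_indep (max i j + 1) (fun n => (n : ℝ)) (fun n => Nat.cast_nonneg n)
      (fun a b hab => Nat.cast_le.mpr hab)
    have hi : i < max i j + 1 := Nat.lt_succ_of_le (le_max_left i j)
    have hj : j < max i j + 1 := Nat.lt_succ_of_le (le_max_right i j)
    have h2 := h.indepFun (i := ⟨i, hi⟩) (j := ⟨j, hj⟩) (by simpa using hij)
    simpa [Function.onFun, hX, Nat.cast_add, Nat.cast_one] using h2
  have hident : ∀ i, IdentDistrib (X i) (X 0) ℙ ℙ := fun i =>
    ⟨(hXm i).aemeasurable, (hXm 0).aemeasurable, by rw [hXmap i, hXmap 0]⟩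
  have hmean : (ℙ : Measure Ω)[X 0] = 0 := by
    have h := integral_map (hXm 0).aemeasurable (aestronglyMeasurable_id (μ := Measure.map (X 0) ℙ))
    simp only [id] at h
    rw [← h, hXmap 0, integral_id_gauss one_ne_zero]
  have hLLN := strong_law_ae_real X hint hindep hident
  rw [hmean] at hLLN
  filter_upwards [hLLN, hW_zero] with ω h h0
  have hsum : ∀ n : ℕ, ∑ i ∈ Finset.range n, X i ω = W n ω := by
    intro n
    calc ∑ i ∈ Finset.range n, X i ω
        = ∑ i ∈ Finset.range n, (W ((i+1:ℕ):ℝ) ω - W ((i:ℕ):ℝ) ω) :=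
          Finset.sum_congr rfl (fun i _ => by simp only [hX]; push_cast; ring)
      _ = W ((n:ℕ):ℝ) ω - W ((0:ℕ):ℝ) ω := Finset.sum_range_sub (fun i : ℕ => W ((i:ℕ):ℝ) ω) n
      _ = W n ω := by simp [h0]
  have heq : (fun n : ℕ => (∑ i ∈ Finset.range n, X i ω) / n) = fun n : ℕ => W n ω / n :=
    funext fun n => by rw [hsum n]
  rwa [heq] at h

-- the elementary real bound used to sum over levels
lemma level_bound {c : ℝ} (hc : 16 ≤ c) (m : ℕ) :
    (2:ℝ)^m * (2 * Real.exp (-(c * (9/8)^m))) ≤ 4 * Real.exp (-c) * (1/2)^m := by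
  have h98 : (1:ℝ) + (m:ℝ) * (1/8) ≤ (9/8)^m := by
    have h := one_add_mul_le_pow (by norm_num : (-2:ℝ) ≤ 1/8) m
    calc (1:ℝ) + (m:ℝ) * (1/8) ≤ ((1:ℝ) + 1/8)^m := h
      _ = (9/8)^m := by norm_num
  have hcm : c + 2*(m:ℝ) ≤ c * (9/8)^m := by nlinarith [h98, hc, (Nat.cast_nonneg m : (0:ℝ) ≤ (m:ℝ))]
  have hexp : Real.exp (-(c * (9/8)^m)) ≤ Real.exp (-(c + 2*m)) :=
    Real.exp_le_exp.mpr (by linarith)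
  have he2 : Real.exp 1 ≥ 2 := by
    have := Real.add_one_le_exp 1
    linarith
  have he4 : (4:ℝ) ≤ Real.exp 2 := by
    have : Real.exp 2 = Real.exp 1 * Real.exp 1 := by rw [← Real.exp_add]; norm_num
    nlinarith [he2]
  have hkey : (2:ℝ) * Real.exp (-2) ≤ 1/2 := by
    rw [Real.exp_neg]
    rw [mul_inv_le_iff₀ (by positivity)]
    nlinarith [he4]
  calc (2:ℝ)^m * (2 * Real.exp (-(c * (9/8)^m)))
      ≤ (2:ℝ)^m * (2 * Real.exp (-(c + 2*m))) := by
        gcongr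
    _ = 2 * Real.exp (-c) * (2 * Real.exp (-2))^m := by
        rw [show (-(c + 2*(m:ℝ))) = -c + (m:ℝ)*(-2) by ring, Real.exp_add, Real.exp_nat_mul,
          mul_pow]
        ring
    _ ≤ 2 * Real.exp (-c) * (1/2)^m := by
        refine mul_le_mul_of_nonneg_left (pow_le_pow_left₀ (by positivity) hkey m) (by positivity)
    _ ≤ 4 * Real.exp (-c) * (1/2)^m := by
        have : (0:ℝ) ≤ Real.exp (-c) * (1/2)^m := by positivity
        nlinarith [this]

lemma osc_control {Ω : Type*} [MeasureSpace Ω] [IsProbabilityMeasure (ℙ : Measure Ω)]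
    (W : ℝ → Ω → ℝ)
    (hW_meas : ∀ t : ℝ, Measurable (W t))
    (hW_cont : ∀ᵐ ω ∂(ℙ : Measure Ω), Continuous fun t => W t ω)
    (hW_gauss : ∀ s t : ℝ, 0 ≤ s → s ≤ t →
      Measure.map (fun ω => W t ω - W s ω) ℙ = gaussianReal 0 (t - s).toNNReal)
    {δ : ℝ} (hδ : 0 < δ) :
    ∀ᵐ ω ∂(ℙ : Measure Ω), ∀ᶠ n : ℕ in atTop,
      ∀ t ∈ Set.Icc (n:ℝ) ((n:ℝ)+1), |W t ω - W (n:ℝ) ω| ≤ δ * n := by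
  classical
  -- bad events
  set B : ℕ → ℕ → Set Ω := fun n m =>
    ⋃ k ∈ Finset.range (2^m), {ω | δ * n / 4 * (3/4)^m <
      |W ((n:ℝ) + ((k:ℝ)+1)/2^m) ω - W ((n:ℝ) + (k:ℝ)/2^m) ω|} with hB
  set E : ℕ → Set Ω := fun n => ⋃ m, B n m with hE
  -- single increment bound
  have hsingle : ∀ n m k : ℕ, 1 ≤ n →
      (ℙ : Measure Ω) {ω | δ * n / 4 * (3/4)^m <
        |W ((n:ℝ) + ((k:ℝ)+1)/2^m) ω - W ((n:ℝ) + (k:ℝ)/2^m) ω|}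
      ≤ ENNReal.ofReal (2 * Real.exp (-((δ*n)^2/32 * (9/8)^m))) := by
    intro n m k hn
    set a : ℝ := δ * n / 4 * (3/4)^m with ha
    have hn1 : (1:ℝ) ≤ (n:ℝ) := by exact_mod_cast hn
    have ha0 : 0 < a := by positivity
    set Y : Ω → ℝ := fun ω => W ((n:ℝ) + ((k:ℝ)+1)/2^m) ω - W ((n:ℝ) + (k:ℝ)/2^m) ω with hY
    have hYm : Measurable Y := (hW_meas _).sub (hW_meas _)
    have hmap : Measure.map Y ℙ = gaussianReal 0 ((1:ℝ)/2^m).toNNReal := by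
      have h1 := hW_gauss ((n:ℝ) + (k:ℝ)/2^m) ((n:ℝ) + ((k:ℝ)+1)/2^m)
        (by positivity) (by gcongr; linarith)
      have h2 : ((n:ℝ) + ((k:ℝ)+1)/2^m) - ((n:ℝ) + (k:ℝ)/2^m) = 1/2^m := by ring
      rw [h2] at h1
      exact h1
    set v : NNReal := ((1:ℝ)/2^m).toNNReal with hv
    have hv0 : v ≠ 0 := by
      simp only [hv, ne_eq, Real.toNNReal_eq_zero, not_le]
      positivity
    have hvr : (v : ℝ) = 1/2^m := Real.coe_toNNReal _ (by positivity)
    have hset : MeasurableSet {x : ℝ | a ≤ |x|} :=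
      measurableSet_le measurable_const _root_.measurable_abs
    calc (ℙ : Measure Ω) {ω | a < |Y ω|}
        ≤ (ℙ : Measure Ω) {ω | a ≤ |Y ω|} :=
          measure_mono (fun ω (h : a < |Y ω|) => (h.le : a ≤ |Y ω|))
      _ = (gaussianReal 0 v) {x | a ≤ |x|} := by
          rw [← hmap, Measure.map_apply hYm hset]
          rfl
      _ ≤ ENNReal.ofReal (2 * Real.exp (-a^2 / (2*(v:ℝ)))) := gauss_abs_tail hv0 ha0
      _ = ENNReal.ofReal (2 * Real.exp (-((δ*n)^2/32 * (9/8)^m))) := by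
          congr 2
          have h916 : ((3:ℝ)/4)^m * ((3:ℝ)/4)^m = (9/16 : ℝ)^m := by rw [← mul_pow]; norm_num
          have hp : (9/8:ℝ)^m = ((3/4:ℝ)^m * (3/4)^m) * 2^m := by
            rw [h916, ← mul_pow]; norm_num
          rw [hvr, ha, hp]
          have hw : (0:ℝ) < (2:ℝ)^m := by positivity
          generalize ((3:ℝ)/4)^m = u
          generalize hww : ((2:ℝ)^m) = w at hw
          field_simp
          ring

  -- level bound
  have hlevel : ∀ n m : ℕ, 1 ≤ n →
      (ℙ : Measure Ω) (B n m) ≤ (2^m : ℝ≥0∞) *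
        ENNReal.ofReal (2 * Real.exp (-((δ*n)^2/32 * (9/8)^m))) := by
    intro n m hn
    calc (ℙ : Measure Ω) (B n m)
        ≤ ∑ k ∈ Finset.range (2^m), (ℙ : Measure Ω) {ω | δ * n / 4 * (3/4)^m <
            |W ((n:ℝ) + ((k:ℝ)+1)/2^m) ω - W ((n:ℝ) + (k:ℝ)/2^m) ω|} :=
          measure_biUnion_finset_le _ _
      _ ≤ ∑ _k ∈ Finset.range (2^m),
            ENNReal.ofReal (2 * Real.exp (-((δ*n)^2/32 * (9/8)^m))) :=
          Finset.sum_le_sum (fun k _ => hsingle n m k hn)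
      _ = (2^m : ℝ≥0∞) * ENNReal.ofReal (2 * Real.exp (-((δ*n)^2/32 * (9/8)^m))) := by
          rw [Finset.sum_const, Finset.card_range, nsmul_eq_mul]
          norm_cast
  -- whole bad event bound
  have hE_bound : ∀ n : ℕ, 1 ≤ n → 24 ≤ δ * n →
      (ℙ : Measure Ω) (E n) ≤ ENNReal.ofReal (8 * Real.exp (-((δ*n)^2/32))) := by
    intro n hn hδn
    set c : ℝ := (δ*n)^2/32 with hc
    have hc16 : 16 ≤ c := by nlinarith [hδn]
    calc (ℙ : Measure Ω) (E n) ≤ ∑' m, (ℙ : Measure Ω) (B n m) := measure_iUnion_le _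
      _ ≤ ∑' m : ℕ, ENNReal.ofReal (4 * Real.exp (-c) * (1/2)^m) := by
          apply ENNReal.tsum_le_tsum
          intro m
          refine (hlevel n m hn).trans ?_
          have h2 : (2^m : ℝ≥0∞) = ENNReal.ofReal ((2:ℝ)^m) := by
            rw [ENNReal.ofReal_pow (by norm_num)]
            norm_num
          rw [h2, ← ENNReal.ofReal_mul (by positivity)]
          exact ENNReal.ofReal_le_ofReal (level_bound hc16 m)
      _ = ENNReal.ofReal (∑' m : ℕ, 4 * Real.exp (-c) * (1/2)^m) := by
          rw [ENNReal.ofReal_tsum_of_nonneg (fun m => by positivity)]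
          exact (summable_geometric_two).mul_left _
      _ = ENNReal.ofReal (8 * Real.exp (-c)) := by
          rw [tsum_mul_left, tsum_geometric_two]
          ring_nf
  -- Borel-Cantelli
  set N : ℕ := max 1 ⌈(24:ℝ)/δ⌉₊ with hN
  have hδN : ∀ i : ℕ, 24 ≤ δ * ((i + N : ℕ):ℝ) := by
    intro i
    have h1 : (24:ℝ)/δ ≤ (⌈(24:ℝ)/δ⌉₊ : ℝ) := Nat.le_ceil _
    have h2 : ((⌈(24:ℝ)/δ⌉₊ : ℕ):ℝ) ≤ ((i + N : ℕ):ℝ) := by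
      have : ⌈(24:ℝ)/δ⌉₊ ≤ i + N := le_trans (le_max_right _ _) (Nat.le_add_left _ _)
      exact_mod_cast this
    have h3 : (24:ℝ)/δ ≤ ((i + N:ℕ):ℝ) := le_trans h1 h2
    calc (24:ℝ) = δ * (24/δ) := by field_simp
      _ ≤ δ * ((i + N:ℕ):ℝ) := by gcongr
  have hN1 : ∀ i : ℕ, 1 ≤ i + N := fun i => le_trans (le_max_left 1 _) (Nat.le_add_left _ _)
  set q : ℝ := Real.exp (-(3/2 * δ)) with hq
  have hq0 : 0 ≤ q := Real.exp_nonneg _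
  have hq1 : q < 1 := by
    rw [hq, Real.exp_lt_one_iff]
    linarith
  have hsummable : (∑' i : ℕ, (ℙ : Measure Ω) (E (i + N))) ≠ ⊤ := by
    have hb : ∀ i : ℕ, (ℙ : Measure Ω) (E (i + N)) ≤ ENNReal.ofReal (8 * q^i) := by
      intro i
      refine (hE_bound (i + N) (hN1 i) (hδN i)).trans ?_
      apply ENNReal.ofReal_le_ofReal
      have hle : 3/2 * δ * i ≤ (δ * ((i + N:ℕ):ℝ))^2/32 := by
        have h24 := hδN i
        have hi0 : (0:ℝ) ≤ δ * (i:ℝ) := by positivity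
        have hsplit : δ * ((i + N:ℕ):ℝ) = δ * (i:ℝ) + δ * ((N:ℕ):ℝ) := by push_cast; ring
        have hδNN : 24 ≤ δ * ((N:ℕ):ℝ) := by
          have := hδN 0
          simpa using this
        nlinarith [h24, hi0, hsplit, hδNN, sq_nonneg (δ * ((i + N:ℕ):ℝ) - 24)]
      have : Real.exp (-((δ * ((i + N:ℕ):ℝ))^2/32)) ≤ q^i := by
        rw [hq, ← Real.exp_nat_mul]
        apply Real.exp_le_exp.mpr
        have : (i:ℝ) * -(3/2*δ) = -(3/2 * δ * i) := by ring
        rw [this]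
        linarith
      nlinarith [this, Real.exp_nonneg (-((δ * ((i + N:ℕ):ℝ))^2/32))]
    have : (∑' i : ℕ, (ℙ : Measure Ω) (E (i + N))) ≤
        ENNReal.ofReal (∑' i : ℕ, 8 * q^i) := by
      rw [ENNReal.ofReal_tsum_of_nonneg (fun i => by positivity)
        ((summable_geometric_of_lt_one hq0 hq1).mul_left _)]
      exact ENNReal.tsum_le_tsum hb
    exact ne_top_of_le_ne_top ENNReal.ofReal_ne_top this
  have hBC := MeasureTheory.ae_eventually_notMem hsummable
  -- pointwise conclusion
  filter_upwards [hBC, hW_cont] with ω hgood hcont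
  rw [eventually_atTop] at hgood ⊢
  obtain ⟨I, hI⟩ := hgood
  refine ⟨I + N, fun n hn => ?_⟩
  have hnot : ω ∉ E n := by
    have h1 : n - N + N = n := Nat.sub_add_cancel (le_trans (Nat.le_add_left _ _) hn)
    have h2 : I ≤ n - N := by omega
    have := hI (n - N) h2
    rwa [h1] at this
  have hn1 : 1 ≤ n := le_trans (hN1 I) (by omega)
  have hincr : ∀ m k : ℕ, k < 2^m →
      |W ((n:ℝ) + ((k:ℝ)+1)/2^m) ω - W ((n:ℝ) + (k:ℝ)/2^m) ω| ≤ δ * n / 4 * (3/4)^m := by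
    intro m k hk
    by_contra hcon
    push_neg at hcon
    apply hnot
    rw [hE]
    refine Set.mem_iUnion.mpr ⟨m, ?_⟩
    rw [hB]
    exact Set.mem_biUnion (Finset.mem_range.mpr hk) hcon
  have hchain := chain_dyadic (fun t => W t ω) n (fun m => δ * n / 4 * (3/4)^m)
    (fun m => by positivity) hincr
  have hpartial : ∀ M : ℕ, ∑ m ∈ Finset.range (M+1), δ * n / 4 * (3/4)^m ≤ δ * n := by
    intro M
    rw [← Finset.mul_sum]
    have hgeom : ∑ m ∈ Finset.range (M+1), ((3:ℝ)/4)^m ≤ 4 := by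
      have h34 : ((3:ℝ)/4) ≠ 1 := by norm_num
      rw [geom_sum_eq h34]
      have hp0 : (0:ℝ) ≤ (3/4:ℝ)^(M+1) := by positivity
      have hp1 : ((3:ℝ)/4)^(M+1) ≤ 1 := pow_le_one₀ (by norm_num) (by norm_num)
      have : ((3/4:ℝ)^(M+1) - 1) / (3/4 - 1) = (1 - (3/4:ℝ)^(M+1)) * 4 := by ring
      rw [this]
      nlinarith
    calc δ * n / 4 * ∑ m ∈ Finset.range (M+1), ((3:ℝ)/4)^m
        ≤ δ * n / 4 * 4 := by
          apply mul_le_mul_of_nonneg_left hgeom (by positivity)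
      _ = δ * n := by ring
  have hdyadic : ∀ M : ℕ, ∀ k : ℕ, k ≤ 2^M →
      |W ((n:ℝ) + (k:ℝ)/2^M) ω - W (n:ℝ) ω| ≤ δ * n :=
    fun M k hk => le_trans (hchain M k hk) (hpartial M)
  exact dyadic_extend (fun t => W t ω) hcont n (δ * n) hdyadic

lemma wiener_div_tendsto_zero {Ω : Type*} [MeasureSpace Ω] [IsProbabilityMeasure (ℙ : Measure Ω)]
    (W : ℝ → Ω → ℝ)
    (hW_meas : ∀ t : ℝ, Measurable (W t))
    (hW_zero : ∀ᵐ ω ∂(ℙ : Measure Ω), W 0 ω = 0)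
    (hW_cont : ∀ᵐ ω ∂(ℙ : Measure Ω), Continuous fun t => W t ω)
    (hW_gauss : ∀ s t : ℝ, 0 ≤ s → s ≤ t →
      Measure.map (fun ω => W t ω - W s ω) ℙ = gaussianReal 0 (t - s).toNNReal)
    (hW_indep : ∀ (n : ℕ) (t : ℕ → ℝ), (∀ i, 0 ≤ t i) → Monotone t →
      iIndepFun (m := fun _ : Fin n => (inferInstance : MeasurableSpace ℝ))
        (fun i : Fin n => fun ω => W (t (i + 1)) ω - W (t i) ω) ℙ) :
    ∀ᵐ ω ∂(ℙ : Measure Ω), Tendsto (fun t : ℝ => W t ω / t) atTop (𝓝 0) := by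
  have hosc : ∀ᵐ ω ∂(ℙ : Measure Ω), ∀ j : ℕ, ∀ᶠ n : ℕ in atTop,
      ∀ t ∈ Set.Icc (n:ℝ) ((n:ℝ)+1), |W t ω - W (n:ℝ) ω| ≤ (1/((j:ℝ)+1)) * n := by
    rw [ae_all_iff]
    intro j
    exact osc_control W hW_meas hW_cont hW_gauss (δ := 1/((j:ℝ)+1)) (by positivity)
  filter_upwards [slln_nat W hW_meas hW_zero hW_gauss hW_indep, hosc] with ω h1 h2
  rw [NormedAddCommGroup.tendsto_nhds_zero]
  intro ε hε
  obtain ⟨j, hj⟩ := exists_nat_gt (3/ε)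
  set δ : ℝ := 1/((j:ℝ)+1) with hδdef
  have hδ0 : 0 < δ := by positivity
  have hδε : 2 * δ < ε := by
    have hj1 : 3/ε < (j:ℝ)+1 := by linarith [hj]
    have h3 : 3 < ε * ((j:ℝ)+1) := by
      rw [div_lt_iff₀ hε] at hj1
      linarith
    have hj1pos : (0:ℝ) < (j:ℝ)+1 := by positivity
    rw [hδdef, show (2:ℝ) * (1/((j:ℝ)+1)) = 2/((j:ℝ)+1) by ring, div_lt_iff₀ hj1pos]
    nlinarith [h3]
  have he1 : ∀ᶠ n : ℕ in atTop, |W (n:ℝ) ω / n| < δ := by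
    have := h1
    rw [NormedAddCommGroup.tendsto_nhds_zero] at this
    exact this δ hδ0
  have he2 := h2 j
  rw [eventually_atTop] at he1 he2
  obtain ⟨n1, hn1⟩ := he1
  obtain ⟨n2, hn2⟩ := he2
  rw [eventually_atTop]
  refine ⟨((max (max n1 n2) 1 : ℕ):ℝ) + 1, fun t ht => ?_⟩
  set n0 : ℕ := max (max n1 n2) 1 with hn0
  have ht0 : (0:ℝ) < t := by
    have : (1:ℝ) ≤ (n0:ℝ) := by exact_mod_cast le_max_right (max n1 n2) 1
    linarith
  set n : ℕ := ⌊t⌋₊ with hn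
  have hfl : (n:ℝ) ≤ t := Nat.floor_le ht0.le
  have hfu : t < (n:ℝ) + 1 := Nat.lt_floor_add_one t
  have hn0n : n0 ≤ n := by
    rw [hn]
    rw [Nat.le_floor_iff ht0.le]
    push_cast
    linarith
  have hnn1 : n1 ≤ n := le_trans (le_trans (le_max_left n1 n2) (le_max_left _ 1)) hn0n
  have hnn2 : n2 ≤ n := le_trans (le_trans (le_max_right n1 n2) (le_max_left _ 1)) hn0n
  have hn1' : 1 ≤ n := le_trans (le_max_right (max n1 n2) 1) hn0n
  have hnpos : (0:ℝ) < (n:ℝ) := by exact_mod_cast hn1'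
  have hosc' : |W t ω - W (n:ℝ) ω| ≤ δ * n :=
    hn2 n hnn2 t ⟨hfl, hfu.le⟩
  have hWn : |W (n:ℝ) ω| < δ * n := by
    have := hn1 n hnn1
    rw [abs_div, abs_of_pos hnpos] at this
    rw [div_lt_iff₀ hnpos] at this
    linarith [this]
  have hWt : |W t ω| ≤ 2 * δ * n := by
    calc |W t ω| ≤ |W (n:ℝ) ω| + |W t ω - W (n:ℝ) ω| := by
          have := abs_sub_abs_le_abs_sub (W t ω) (W (n:ℝ) ω)
          have h2 := abs_add_le (W (n:ℝ) ω) (W t ω - W (n:ℝ) ω)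
          calc |W t ω| = |W (n:ℝ) ω + (W t ω - W (n:ℝ) ω)| := by ring_nf
            _ ≤ |W (n:ℝ) ω| + |W t ω - W (n:ℝ) ω| := h2
      _ ≤ δ * n + δ * n := add_le_add hWn.le hosc'
      _ = 2 * δ * n := by ring
  rw [Real.norm_eq_abs, abs_div, abs_of_pos ht0]
  calc |W t ω| / t ≤ (2 * δ * n) / t := by gcongr
    _ ≤ (2 * δ * n) / n := by
        apply div_le_div_of_nonneg_left ?_ hnpos hfl |>.trans_eq rfl
        positivity
    _ = 2 * δ := by field_simp
    _ < ε := hδε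

/-- Dambis–Dubins–Schwarz time-changed form of the lemma: if `W` is a standard real
Brownian motion, `τ` is an a.s. nondecreasing continuous nonnegative time change, and
`A` is a real process with `liminf A_s / τ_s > 0` a.s. on `{τ_s → ∞}`, then
`W (τ_s) + A_s → +∞` a.s. on `{τ_s → ∞}`. -/
theorem brownian_plus_dominating_drift_tendsto_atTop
    {Ω : Type*} [MeasureSpace Ω] [IsProbabilityMeasure (ℙ : Measure Ω)]
    (W : ℝ → Ω → ℝ)
    (hW_meas : ∀ t : ℝ, Measurable (W t))
    (hW_zero : ∀ᵐ ω ∂(ℙ : Measure Ω), W 0 ω = 0)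
    (hW_cont : ∀ᵐ ω ∂(ℙ : Measure Ω), Continuous fun t => W t ω)
    (hW_gauss : ∀ s t : ℝ, 0 ≤ s → s ≤ t →
      Measure.map (fun ω => W t ω - W s ω) ℙ = gaussianReal 0 (t - s).toNNReal)
    (hW_indep : ∀ (n : ℕ) (t : ℕ → ℝ), (∀ i, 0 ≤ t i) → Monotone t →
      iIndepFun (m := fun _ : Fin n => (inferInstance : MeasurableSpace ℝ))
        (fun i : Fin n => fun ω => W (t (i + 1)) ω - W (t i) ω) ℙ)
    (τ : ℝ → Ω → ℝ) (A : ℝ → Ω → ℝ)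
    (hτ_nonneg : ∀ s ω, 0 ≤ τ s ω)
    (hτ_path : ∀ᵐ ω ∂(ℙ : Measure Ω),
      Monotone (fun s => τ s ω) ∧ Continuous (fun s => τ s ω))
    (h_liminf : ∀ᵐ ω ∂(ℙ : Measure Ω),
      Tendsto (fun s => τ s ω) atTop atTop →
        0 < liminf (fun s => A s ω / τ s ω) atTop) :
    ∀ᵐ ω ∂(ℙ : Measure Ω),
      Tendsto (fun s => τ s ω) atTop atTop →
        Tendsto (fun s => W (τ s ω) ω + A s ω) atTop atTop := by
  filter_upwards [wiener_div_tendsto_zero W hW_meas hW_zero hW_cont hW_gauss hW_indep,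
    h_liminf] with ω hW hlim hτ
  have hL := hlim hτ
  have hS : {x : ℝ | ∀ᶠ s in atTop, x ≤ A s ω / τ s ω}.Nonempty := by
    by_contra h
    rw [Set.not_nonempty_iff_eq_empty] at h
    rw [liminf_eq, h, Real.sSup_empty] at hL
    exact lt_irrefl 0 hL
  obtain ⟨a, ha_mem, ha_pos⟩ := exists_lt_of_lt_csSup hS (by rwa [← liminf_eq])
  have ha2 : 0 < a / 2 := by linarith
  have hτ1 : ∀ᶠ s : ℝ in atTop, 1 ≤ τ s ω := hτ.eventually_ge_atTop 1
  have hWτ : Tendsto (fun s => W (τ s ω) ω / τ s ω) atTop (𝓝 0) := hW.comp hτ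
  have hsmall : ∀ᶠ s : ℝ in atTop, |W (τ s ω) ω / τ s ω| < a/2 := by
    rw [NormedAddCommGroup.tendsto_nhds_zero] at hWτ
    exact hWτ (a/2) ha2
  have hmain : ∀ᶠ s : ℝ in atTop, a/2 * τ s ω ≤ W (τ s ω) ω + A s ω := by
    filter_upwards [ha_mem, hτ1, hsmall] with s h1 h2 h3
    have hτ0 : (0:ℝ) < τ s ω := by linarith
    have hA : a * τ s ω ≤ A s ω := by
      rw [le_div_iff₀ hτ0] at h1
      linarith
    have hWb : -(a/2 * τ s ω) ≤ W (τ s ω) ω := by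
      rw [abs_div, abs_of_pos hτ0, div_lt_iff₀ hτ0] at h3
      have := neg_abs_le (W (τ s ω) ω)
      linarith
    nlinarith [hτ0]
  exact tendsto_atTop_mono' atTop hmain (hτ.const_mul_atTop ha2)
end

section
/- The Ricci tensor of the Schwarzschild metric vanishes identically: for the Christoffel symbols Γ^k_{ij} of the Schwarzschild metric g on Ω_sph, one has Ric_{ij}(p) = 0 for all indices i,j ∈ {t,r,φ,ψ} and all points p ∈ Ω_sph. -/
noncomputable section

/-- Partial derivative of `f` in the `i`-th coordinate direction at `p`. -/
def coordPDeriv {n : ℕ} (f : (Fin n → ℝ) → ℝ) (i : Fin n) (p : Fin n → ℝ) : ℝ :=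
  fderiv ℝ f p (Pi.single i 1)

/-- Christoffel symbols `Γ^k_{ij}` of a metric `g` given in coordinates on (an open
subset of) `ℝⁿ`: `Γ^k_{ij} = (1/2) Σ_l g^{kl} (∂_i g_{jl} + ∂_j g_{il} − ∂_l g_{ij})`. -/
def christoffel {n : ℕ} (g : (Fin n → ℝ) → Matrix (Fin n) (Fin n) ℝ)
    (k i j : Fin n) (p : Fin n → ℝ) : ℝ :=
  (1 / 2) * ∑ l, (g p)⁻¹ k l *
    (coordPDeriv (fun q => g q j l) i p + coordPDeriv (fun q => g q i l) j p
      - coordPDeriv (fun q => g q i j) l p)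

/-- The Schwarzschild metric in spherical coordinates `(t, r, φ, ψ)`. -/
def schwMetric (R : ℝ) (p : Fin 4 → ℝ) : Matrix (Fin 4) (Fin 4) ℝ :=
  Matrix.diagonal
    ![1 - R / p 1, -(1 - R / p 1)⁻¹, -(p 1) ^ 2, -(p 1) ^ 2 * Real.sin (p 2) ^ 2]

/-- The coordinate chart `Ω_sph = {(t,r,φ,ψ) : r > R, 0 < φ < π}`. -/
def sphDomain (R : ℝ) : Set (Fin 4 → ℝ) :=
  {p | R < p 1 ∧ 0 < p 2 ∧ p 2 < Real.pi}

/-- The Ricci tensor in coordinates: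
`Ric_{ij} = Σ_k ∂_k Γ^k_{ij} − Σ_k ∂_j Γ^k_{ik} + Σ_{k,l} (Γ^k_{kl} Γ^l_{ij} − Γ^k_{jl} Γ^l_{ik})`. -/
def ricci {n : ℕ} (g : (Fin n → ℝ) → Matrix (Fin n) (Fin n) ℝ)
    (i j : Fin n) (p : Fin n → ℝ) : ℝ :=
  (∑ k, coordPDeriv (fun q => christoffel g k i j q) k p)
    - (∑ k, coordPDeriv (fun q => christoffel g k i k q) j p)
    + ∑ k, ∑ l, (christoffel g k k l p * christoffel g l i j p
        - christoffel g k j l p * christoffel g l i k p)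

/-- inverse metric diagonal entries -/
def wv (R : ℝ) (k : Fin 4) (q : Fin 4 → ℝ) : ℝ :=
  ![(1 - R / q 1)⁻¹, -(1 - R / q 1), -((q 1) ^ 2)⁻¹,
    -((q 1) ^ 2 * Real.sin (q 2) ^ 2)⁻¹] k

/-- derivative table of the diagonal metric entries -/
def dv (R : ℝ) (i l : Fin 4) (q : Fin 4 → ℝ) : ℝ :=
  ![![0, R / q 1 ^ 2, 0, 0],
    ![0, R / q 1 ^ 2 * ((1 - R / q 1) ^ 2)⁻¹, 0, 0],
    ![0, -(2 * q 1), 0, 0],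
    ![0, -(2 * q 1) * Real.sin (q 2) ^ 2,
        -(q 1 ^ 2) * (2 * Real.sin (q 2) * Real.cos (q 2)), 0]] i l

def Dm (R : ℝ) (i j l : Fin 4) (q : Fin 4 → ℝ) : ℝ := if i = j then dv R i l q else 0

/-- closed form Christoffel symbols -/
def Γe (R : ℝ) (k i j : Fin 4) (q : Fin 4 → ℝ) : ℝ :=
  (1 / 2) * wv R k q * (Dm R j k i q + Dm R i k j q - Dm R i j k q)

lemma isOpen_sphDomain (R : ℝ) : IsOpen (sphDomain R) := by
  have : sphDomain R = {p : Fin 4 → ℝ | R < p 1} ∩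
      ({p : Fin 4 → ℝ | 0 < p 2} ∩ {p : Fin 4 → ℝ | p 2 < Real.pi}) := by
    ext p; simp [sphDomain, and_assoc]
  rw [this]
  exact (isOpen_lt continuous_const (continuous_apply 1)).inter
    ((isOpen_lt continuous_const (continuous_apply 2)).inter
      (isOpen_lt (continuous_apply 2) continuous_const))

section facts
variable {R : ℝ} {p : Fin 4 → ℝ} (hR : 0 < R) (hp : p ∈ sphDomain R)
include hR hp

lemma hx1 : (0:ℝ) < p 1 := hR.trans hp.1
lemma hx0 : p 1 ≠ 0 := (hx1 hR hp).ne'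
lemma hxR : p 1 - R ≠ 0 := sub_ne_zero_of_ne (ne_of_gt hp.1)
lemma hfpos : (0:ℝ) < 1 - R / p 1 := by
  have h1 := hx1 hR hp
  have : R / p 1 < 1 := (div_lt_one h1).2 hp.1
  linarith
lemma hf0 : 1 - R / p 1 ≠ 0 := (hfpos hR hp).ne'
lemma hs0 : Real.sin (p 2) ≠ 0 :=
  (Real.sin_pos_of_pos_of_lt_pi hp.2.1 hp.2.2).ne'
end facts

lemma ginv_apply {R : ℝ} {p : Fin 4 → ℝ} (hR : 0 < R) (hp : p ∈ sphDomain R) (k l : Fin 4) :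
    (schwMetric R p)⁻¹ k l = if k = l then wv R k p else 0 := by
  have h1 := hx0 hR hp
  have h2 := hf0 hR hp
  have h3 := hs0 hR hp
  have key : schwMetric R p * Matrix.diagonal (fun k => wv R k p) = 1 := by
    rw [schwMetric, Matrix.diagonal_mul_diagonal, ← Matrix.diagonal_one]
    ext a b
    fin_cases a <;> fin_cases b <;>
      simp [wv, Matrix.diagonal_apply, Matrix.one_apply] <;>
      field_simp [sub_ne_zero.mpr (ne_of_gt hp.1)] <;> ring
  rw [Matrix.inv_eq_right_inv key, Matrix.diagonal_apply]

lemma coordPDeriv_of_hasFDerivAt {f : (Fin 4 → ℝ) → ℝ} {L : (Fin 4 → ℝ) →L[ℝ] ℝ}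
    {p : Fin 4 → ℝ} (h : HasFDerivAt f L p) (i : Fin 4) :
    coordPDeriv f i p = L (Pi.single i 1) := by
  rw [coordPDeriv, h.fderiv]

lemma coordPDeriv_congr {f g : (Fin 4 → ℝ) → ℝ} {U : Set (Fin 4 → ℝ)} {p : Fin 4 → ℝ}
    (hU : IsOpen U) (hp : p ∈ U) (h : ∀ q ∈ U, f q = g q) (m : Fin 4) :
    coordPDeriv f m p = coordPDeriv g m p := by
  unfold coordPDeriv
  rw [Filter.EventuallyEq.fderiv_eq]
  filter_upwards [hU.mem_nhds hp] with q hq using h q hq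

lemma coordPDeriv_const (c : ℝ) (i : Fin 4) (p : Fin 4 → ℝ) :
    coordPDeriv (fun _ => c) i p = 0 := by
  simp [coordPDeriv]

abbrev projCLM (m : Fin 4) : (Fin 4 → ℝ) →L[ℝ] ℝ := ContinuousLinearMap.proj m

lemma hasFDerivAt_coord (m : Fin 4) (p : Fin 4 → ℝ) :
    HasFDerivAt (fun q : Fin 4 → ℝ => q m) (projCLM m) p :=
  (projCLM m).hasFDerivAt

lemma coordPDeriv_mul12 {F G : ℝ → ℝ} {F' G' : ℝ} {p : Fin 4 → ℝ}
    (hF : HasDerivAt F F' (p 1)) (hG : HasDerivAt G G' (p 2)) (m : Fin 4) :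
    coordPDeriv (fun q => F (q 1) * G (q 2)) m p =
      (if m = 1 then F' * G (p 2) else 0) + (if m = 2 then F (p 1) * G' else 0) := by
  have h1 : HasFDerivAt (fun q : Fin 4 → ℝ => F (q 1)) (F' • projCLM 1) p :=
    hF.comp_hasFDerivAt p (hasFDerivAt_coord 1 p)
  have h2 : HasFDerivAt (fun q : Fin 4 → ℝ => G (q 2)) (G' • projCLM 2) p :=
    hG.comp_hasFDerivAt p (hasFDerivAt_coord 2 p)
  rw [coordPDeriv_of_hasFDerivAt (f := fun q => F (q 1) * G (q 2)) (h1.mul h2) m]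
  fin_cases m <;> simp <;> ring

lemma coordPDeriv_comp1 {F : ℝ → ℝ} {F' : ℝ} {p : Fin 4 → ℝ}
    (hF : HasDerivAt F F' (p 1)) (m : Fin 4) :
    coordPDeriv (fun q => F (q 1)) m p = if m = 1 then F' else 0 := by
  have h1 : HasFDerivAt (fun q : Fin 4 → ℝ => F (q 1)) (F' • projCLM 1) p :=
    hF.comp_hasFDerivAt p (hasFDerivAt_coord 1 p)
  rw [coordPDeriv_of_hasFDerivAt h1 m]
  fin_cases m <;> simp

lemma coordPDeriv_comp2 {G : ℝ → ℝ} {G' : ℝ} {p : Fin 4 → ℝ}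
    (hG : HasDerivAt G G' (p 2)) (m : Fin 4) :
    coordPDeriv (fun q => G (q 2)) m p = if m = 2 then G' else 0 := by
  have h1 : HasFDerivAt (fun q : Fin 4 → ℝ => G (q 2)) (G' • projCLM 2) p :=
    hG.comp_hasFDerivAt p (hasFDerivAt_coord 2 p)
  rw [coordPDeriv_of_hasFDerivAt h1 m]
  fin_cases m <;> simp

lemma hasDerivAt_schwf (R x : ℝ) (hx : x ≠ 0) :
    HasDerivAt (fun t : ℝ => 1 - R / t) (R / x ^ 2) x := by
  have h := ((hasDerivAt_inv hx).const_mul R).const_sub 1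
  have h2 : (fun t : ℝ => 1 - R / t) = fun t : ℝ => 1 - R * t⁻¹ := by
    funext t; rw [div_eq_mul_inv]
  rw [h2]
  refine h.congr_deriv (Eq.symm ?_)
  field_simp
lemma hasDerivAt_A (R x : ℝ) (hx : x ≠ 0) (hxR : x - R ≠ 0) :
    HasDerivAt (fun t : ℝ => R / (2 * (t ^ 2 - R * t)))
      (-(R * (2 * x - R)) / (2 * (x ^ 2 - R * x) ^ 2)) x := by
  have hden : HasDerivAt (fun t : ℝ => 2 * (t ^ 2 - R * t)) (2 * (2 * x - R)) x := by
    have := ((hasDerivAt_pow 2 x).sub ((hasDerivAt_id x).const_mul R)).const_mul 2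
    exact this.congr_deriv (by ring)
  have hne : 2 * (x ^ 2 - R * x) ≠ 0 := by
    have : x ^ 2 - R * x = x * (x - R) := by ring
    rw [this]; positivity
  have hx2 : x ^ 2 - R * x ≠ 0 := by
    have : x ^ 2 - R * x = x * (x - R) := by ring
    rw [this]; positivity
  have h := (hasDerivAt_const x R).div hden hne
  refine h.congr_deriv (Eq.symm ?_)
  field_simp [hx2]
  ring
lemma hasDerivAt_B (R x : ℝ) (hx : x ≠ 0) :
    HasDerivAt (fun t : ℝ => R * (t - R) / (2 * t ^ 3))
      (-(R / x ^ 3) + 3 * R ^ 2 / (2 * x ^ 4)) x := by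
  have hnum : HasDerivAt (fun t : ℝ => R * (t - R)) R x := by
    have := ((hasDerivAt_id x).sub_const R).const_mul R
    exact this.congr_deriv (by ring)
  have hden : HasDerivAt (fun t : ℝ => 2 * t ^ 3) (6 * x ^ 2) x := by
    have := (hasDerivAt_pow 3 x).const_mul 2
    exact this.congr_deriv (by ring)
  have hne : 2 * x ^ 3 ≠ 0 := by positivity
  have h := hnum.div hden hne
  refine h.congr_deriv (Eq.symm ?_)
  field_simp
  ring
lemma hasDerivAt_E (y : ℝ) :
    HasDerivAt (fun t : ℝ => -(Real.sin t * Real.cos t)) (Real.sin y ^ 2 - Real.cos y ^ 2) y := by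
  have := ((Real.hasDerivAt_sin y).mul (Real.hasDerivAt_cos y)).neg
  exact this.congr_deriv (by ring)
lemma hasDerivAt_G (y : ℝ) (hs : Real.sin y ≠ 0) :
    HasDerivAt (fun t : ℝ => Real.cos t / Real.sin t) (-(Real.sin y ^ 2)⁻¹) y := by
  have h := (Real.hasDerivAt_cos y).div (Real.hasDerivAt_sin y) hs
  refine h.congr_deriv (Eq.symm ?_)
  have hpy : Real.sin y ^ 2 + Real.cos y ^ 2 = 1 := Real.sin_sq_add_cos_sq y
  field_simp
  linear_combination hpy
lemma hasDerivAt_sinsq (y : ℝ) :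
    HasDerivAt (fun t : ℝ => Real.sin t ^ 2) (2 * Real.sin y * Real.cos y) y := by
  have := (Real.hasDerivAt_sin y).pow 2
  exact this.congr_deriv (by ring)

lemma dg0 {R : ℝ} {p : Fin 4 → ℝ} (hR : 0 < R) (hp : p ∈ sphDomain R) (l : Fin 4) :
    coordPDeriv (fun q => schwMetric R q 0 0) l p = Dm R 0 0 l p := by
  have h1 := hx0 hR hp
  have he : (fun q : Fin 4 → ℝ => schwMetric R q 0 0) = fun q => 1 - R / q 1 := by
    funext q; simp [schwMetric]
  rw [he, coordPDeriv_comp1 (hasDerivAt_schwf R (p 1) h1) l]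
  fin_cases l <;> simp [Dm, dv, Matrix.vecHead, Matrix.vecTail]

lemma dg1 {R : ℝ} {p : Fin 4 → ℝ} (hR : 0 < R) (hp : p ∈ sphDomain R) (l : Fin 4) :
    coordPDeriv (fun q => schwMetric R q 1 1) l p = Dm R 1 1 l p := by
  have h1 := hx0 hR hp
  have h2 := hf0 hR hp
  have he : (fun q : Fin 4 → ℝ => schwMetric R q 1 1) = fun q => -(1 - R / q 1)⁻¹ := by
    funext q; simp [schwMetric]
  have hD : HasDerivAt (fun t : ℝ => -(1 - R / t)⁻¹)
      (R / p 1 ^ 2 * ((1 - R / p 1) ^ 2)⁻¹) (p 1) := by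
    have h := ((hasDerivAt_schwf R (p 1) h1).inv h2).neg
    refine h.congr_deriv (Eq.symm ?_)
    simp [neg_div, div_eq_mul_inv]

  rw [he, coordPDeriv_comp1 hD l]
  fin_cases l <;> simp [Dm, dv, Matrix.vecHead, Matrix.vecTail]

lemma dg2 {R : ℝ} {p : Fin 4 → ℝ} (hR : 0 < R) (hp : p ∈ sphDomain R) (l : Fin 4) :
    coordPDeriv (fun q => schwMetric R q 2 2) l p = Dm R 2 2 l p := by
  have he : (fun q : Fin 4 → ℝ => schwMetric R q 2 2) = fun q => -(q 1 ^ 2) := by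
    funext q; simp [schwMetric]
  have hD : HasDerivAt (fun t : ℝ => -(t ^ 2)) (-(2 * p 1)) (p 1) := by
    have h := (hasDerivAt_pow 2 (p 1)).neg
    exact h.congr_deriv (by ring)
  rw [he, coordPDeriv_comp1 hD l]
  fin_cases l <;> simp [Dm, dv, Matrix.vecHead, Matrix.vecTail]

lemma dg3 {R : ℝ} {p : Fin 4 → ℝ} (hR : 0 < R) (hp : p ∈ sphDomain R) (l : Fin 4) :
    coordPDeriv (fun q => schwMetric R q 3 3) l p = Dm R 3 3 l p := by
  have he : (fun q : Fin 4 → ℝ => schwMetric R q 3 3)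
      = fun q => -(q 1 ^ 2) * Real.sin (q 2) ^ 2 := by
    funext q; simp [schwMetric]
  have hD : HasDerivAt (fun t : ℝ => -(t ^ 2)) (-(2 * p 1)) (p 1) := by
    have h := (hasDerivAt_pow 2 (p 1)).neg
    exact h.congr_deriv (by ring)
  rw [he, coordPDeriv_mul12 hD (hasDerivAt_sinsq (p 2)) l]
  fin_cases l <;> simp [Dm, dv, Matrix.vecHead, Matrix.vecTail] <;> ring

lemma dg {R : ℝ} {p : Fin 4 → ℝ} (hR : 0 < R) (hp : p ∈ sphDomain R) (i j l : Fin 4) :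
    coordPDeriv (fun q => schwMetric R q i j) l p = Dm R i j l p := by
  rcases eq_or_ne i j with rfl | hij
  · fin_cases i
    · exact dg0 hR hp l
    · exact dg1 hR hp l
    · exact dg2 hR hp l
    · exact dg3 hR hp l
  · have he : (fun q : Fin 4 → ℝ => schwMetric R q i j) = fun _ => (0:ℝ) := by
      funext q; simp [schwMetric, Matrix.diagonal_apply_ne _ hij]
    rw [he, coordPDeriv_const]
    simp [Dm, hij]

lemma christoffel_eq {R : ℝ} {p : Fin 4 → ℝ} (hR : 0 < R) (hp : p ∈ sphDomain R)
    (k i j : Fin 4) : christoffel (schwMetric R) k i j p = Γe R k i j p := by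
  unfold christoffel
  simp only [dg hR hp, ginv_apply hR hp, Fin.sum_univ_four]
  fin_cases k <;> simp [Γe] <;> ring
def Ξ (R : ℝ) (k i j m : Fin 4) (p : Fin 4 → ℝ) : ℝ :=
  if (k = 0 ∧ i = 0 ∧ j = 1 ∧ m = 1) ∨ (k = 0 ∧ i = 1 ∧ j = 0 ∧ m = 1) then
    -(R * (2 * p 1 - R)) / (2 * (p 1 ^ 2 - R * p 1) ^ 2)
  else if k = 1 ∧ i = 0 ∧ j = 0 ∧ m = 1 then -(R / p 1 ^ 3) + 3 * R ^ 2 / (2 * p 1 ^ 4)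
  else if k = 1 ∧ i = 1 ∧ j = 1 ∧ m = 1 then R * (2 * p 1 - R) / (2 * (p 1 ^ 2 - R * p 1) ^ 2)
  else if k = 1 ∧ i = 2 ∧ j = 2 ∧ m = 1 then -1
  else if k = 1 ∧ i = 3 ∧ j = 3 ∧ m = 1 then -Real.sin (p 2) ^ 2
  else if k = 1 ∧ i = 3 ∧ j = 3 ∧ m = 2 then (R - p 1) * (2 * Real.sin (p 2) * Real.cos (p 2))
  else if (k = 2 ∧ i = 1 ∧ j = 2 ∧ m = 1) ∨ (k = 2 ∧ i = 2 ∧ j = 1 ∧ m = 1)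
      ∨ (k = 3 ∧ i = 1 ∧ j = 3 ∧ m = 1) ∨ (k = 3 ∧ i = 3 ∧ j = 1 ∧ m = 1) then -(p 1 ^ 2)⁻¹
  else if k = 2 ∧ i = 3 ∧ j = 3 ∧ m = 2 then Real.sin (p 2) ^ 2 - Real.cos (p 2) ^ 2
  else if (k = 3 ∧ i = 2 ∧ j = 3 ∧ m = 2) ∨ (k = 3 ∧ i = 3 ∧ j = 2 ∧ m = 2) then
    -(Real.sin (p 2) ^ 2)⁻¹
  else 0

lemma hasDerivAt_C (R x : ℝ) : HasDerivAt (fun t : ℝ => R - t) (-1) x := by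
  simpa using (hasDerivAt_id x).const_sub R

set_option maxHeartbeats 4000000 in
lemma cpd_Γe {R : ℝ} {p : Fin 4 → ℝ} (hR : 0 < R) (hp : p ∈ sphDomain R) :
    ∀ k i j m : Fin 4, coordPDeriv (fun q => Γe R k i j q) m p = Ξ R k i j m p := by
  have hp1 := hx0 hR hp
  have hp4 := hxR hR hp
  have hps := hs0 hR hp
  intro k i j
  fin_cases k <;> fin_cases i <;> fin_cases j
  · show ∀ m : Fin 4, coordPDeriv (fun q => Γe R 0 0 0 q) m p = Ξ R 0 0 0 m p
    intro m
    have hz : (fun q : Fin 4 → ℝ => Γe R 0 0 0 q) = fun _ => (0:ℝ) := by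
      funext q
      simp [Γe, Dm, dv, wv, Matrix.vecHead, Matrix.vecTail]
    rw [hz, coordPDeriv_const]
    simp [Ξ]
  · show ∀ m : Fin 4, coordPDeriv (fun q => Γe R 0 0 1 q) m p = Ξ R 0 0 1 m p
    intro m
    have hz : ∀ q ∈ sphDomain R, Γe R 0 0 1 q = R / (2 * (q 1 ^ 2 - R * q 1)) := by
      intro q hq
      have hq1 := hx0 hR hq
      have hq2 := hf0 hR hq
      have hq3 := hs0 hR hq
      have hq4 := hxR hR hq
      have hq5 : q 1 ^ 2 - R * q 1 ≠ 0 := by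
        have he : q 1 ^ 2 - R * q 1 = q 1 * (q 1 - R) := by ring
        rw [he]; exact mul_ne_zero hq1 hq4
      simp [Γe, Dm, dv, wv, Matrix.vecHead, Matrix.vecTail]
      field_simp
      try ring
    rw [coordPDeriv_congr (isOpen_sphDomain R) hp hz m, coordPDeriv_comp1 (hasDerivAt_A R (p 1) hp1 hp4) m]
    fin_cases m <;> simp [Ξ] <;> try ring
  · show ∀ m : Fin 4, coordPDeriv (fun q => Γe R 0 0 2 q) m p = Ξ R 0 0 2 m p
    intro m
    have hz : (fun q : Fin 4 → ℝ => Γe R 0 0 2 q) = fun _ => (0:ℝ) := by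
      funext q
      simp [Γe, Dm, dv, wv, Matrix.vecHead, Matrix.vecTail]
    rw [hz, coordPDeriv_const]
    simp [Ξ]
  · show ∀ m : Fin 4, coordPDeriv (fun q => Γe R 0 0 3 q) m p = Ξ R 0 0 3 m p
    intro m
    have hz : (fun q : Fin 4 → ℝ => Γe R 0 0 3 q) = fun _ => (0:ℝ) := by
      funext q
      simp [Γe, Dm, dv, wv, Matrix.vecHead, Matrix.vecTail]
    rw [hz, coordPDeriv_const]
    simp [Ξ]
  · show ∀ m : Fin 4, coordPDeriv (fun q => Γe R 0 1 0 q) m p = Ξ R 0 1 0 m p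
    intro m
    have hz : ∀ q ∈ sphDomain R, Γe R 0 1 0 q = R / (2 * (q 1 ^ 2 - R * q 1)) := by
      intro q hq
      have hq1 := hx0 hR hq
      have hq2 := hf0 hR hq
      have hq3 := hs0 hR hq
      have hq4 := hxR hR hq
      have hq5 : q 1 ^ 2 - R * q 1 ≠ 0 := by
        have he : q 1 ^ 2 - R * q 1 = q 1 * (q 1 - R) := by ring
        rw [he]; exact mul_ne_zero hq1 hq4
      simp [Γe, Dm, dv, wv, Matrix.vecHead, Matrix.vecTail]
      field_simp
      try ring
    rw [coordPDeriv_congr (isOpen_sphDomain R) hp hz m, coordPDeriv_comp1 (hasDerivAt_A R (p 1) hp1 hp4) m]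
    fin_cases m <;> simp [Ξ] <;> try ring
  · show ∀ m : Fin 4, coordPDeriv (fun q => Γe R 0 1 1 q) m p = Ξ R 0 1 1 m p
    intro m
    have hz : (fun q : Fin 4 → ℝ => Γe R 0 1 1 q) = fun _ => (0:ℝ) := by
      funext q
      simp [Γe, Dm, dv, wv, Matrix.vecHead, Matrix.vecTail]
    rw [hz, coordPDeriv_const]
    simp [Ξ]
  · show ∀ m : Fin 4, coordPDeriv (fun q => Γe R 0 1 2 q) m p = Ξ R 0 1 2 m p
    intro m
    have hz : (fun q : Fin 4 → ℝ => Γe R 0 1 2 q) = fun _ => (0:ℝ) := by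
      funext q
      simp [Γe, Dm, dv, wv, Matrix.vecHead, Matrix.vecTail]
    rw [hz, coordPDeriv_const]
    simp [Ξ]
  · show ∀ m : Fin 4, coordPDeriv (fun q => Γe R 0 1 3 q) m p = Ξ R 0 1 3 m p
    intro m
    have hz : (fun q : Fin 4 → ℝ => Γe R 0 1 3 q) = fun _ => (0:ℝ) := by
      funext q
      simp [Γe, Dm, dv, wv, Matrix.vecHead, Matrix.vecTail]
    rw [hz, coordPDeriv_const]
    simp [Ξ]
  · show ∀ m : Fin 4, coordPDeriv (fun q => Γe R 0 2 0 q) m p = Ξ R 0 2 0 m p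
    intro m
    have hz : (fun q : Fin 4 → ℝ => Γe R 0 2 0 q) = fun _ => (0:ℝ) := by
      funext q
      simp [Γe, Dm, dv, wv, Matrix.vecHead, Matrix.vecTail]
    rw [hz, coordPDeriv_const]
    simp [Ξ]
  · show ∀ m : Fin 4, coordPDeriv (fun q => Γe R 0 2 1 q) m p = Ξ R 0 2 1 m p
    intro m
    have hz : (fun q : Fin 4 → ℝ => Γe R 0 2 1 q) = fun _ => (0:ℝ) := by
      funext q
      simp [Γe, Dm, dv, wv, Matrix.vecHead, Matrix.vecTail]
    rw [hz, coordPDeriv_const]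
    simp [Ξ]
  · show ∀ m : Fin 4, coordPDeriv (fun q => Γe R 0 2 2 q) m p = Ξ R 0 2 2 m p
    intro m
    have hz : (fun q : Fin 4 → ℝ => Γe R 0 2 2 q) = fun _ => (0:ℝ) := by
      funext q
      simp [Γe, Dm, dv, wv, Matrix.vecHead, Matrix.vecTail]
    rw [hz, coordPDeriv_const]
    simp [Ξ]
  · show ∀ m : Fin 4, coordPDeriv (fun q => Γe R 0 2 3 q) m p = Ξ R 0 2 3 m p
    intro m
    have hz : (fun q : Fin 4 → ℝ => Γe R 0 2 3 q) = fun _ => (0:ℝ) := by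
      funext q
      simp [Γe, Dm, dv, wv, Matrix.vecHead, Matrix.vecTail]
    rw [hz, coordPDeriv_const]
    simp [Ξ]
  · show ∀ m : Fin 4, coordPDeriv (fun q => Γe R 0 3 0 q) m p = Ξ R 0 3 0 m p
    intro m
    have hz : (fun q : Fin 4 → ℝ => Γe R 0 3 0 q) = fun _ => (0:ℝ) := by
      funext q
      simp [Γe, Dm, dv, wv, Matrix.vecHead, Matrix.vecTail]
    rw [hz, coordPDeriv_const]
    simp [Ξ]
  · show ∀ m : Fin 4, coordPDeriv (fun q => Γe R 0 3 1 q) m p = Ξ R 0 3 1 m p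
    intro m
    have hz : (fun q : Fin 4 → ℝ => Γe R 0 3 1 q) = fun _ => (0:ℝ) := by
      funext q
      simp [Γe, Dm, dv, wv, Matrix.vecHead, Matrix.vecTail]
    rw [hz, coordPDeriv_const]
    simp [Ξ]
  · show ∀ m : Fin 4, coordPDeriv (fun q => Γe R 0 3 2 q) m p = Ξ R 0 3 2 m p
    intro m
    have hz : (fun q : Fin 4 → ℝ => Γe R 0 3 2 q) = fun _ => (0:ℝ) := by
      funext q
      simp [Γe, Dm, dv, wv, Matrix.vecHead, Matrix.vecTail]
    rw [hz, coordPDeriv_const]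
    simp [Ξ]
  · show ∀ m : Fin 4, coordPDeriv (fun q => Γe R 0 3 3 q) m p = Ξ R 0 3 3 m p
    intro m
    have hz : (fun q : Fin 4 → ℝ => Γe R 0 3 3 q) = fun _ => (0:ℝ) := by
      funext q
      simp [Γe, Dm, dv, wv, Matrix.vecHead, Matrix.vecTail]
    rw [hz, coordPDeriv_const]
    simp [Ξ]
  · show ∀ m : Fin 4, coordPDeriv (fun q => Γe R 1 0 0 q) m p = Ξ R 1 0 0 m p
    intro m
    have hz : ∀ q ∈ sphDomain R, Γe R 1 0 0 q = R * (q 1 - R) / (2 * q 1 ^ 3) := by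
      intro q hq
      have hq1 := hx0 hR hq
      have hq2 := hf0 hR hq
      have hq3 := hs0 hR hq
      have hq4 := hxR hR hq
      have hq5 : q 1 ^ 2 - R * q 1 ≠ 0 := by
        have he : q 1 ^ 2 - R * q 1 = q 1 * (q 1 - R) := by ring
        rw [he]; exact mul_ne_zero hq1 hq4
      simp [Γe, Dm, dv, wv, Matrix.vecHead, Matrix.vecTail]
      field_simp
      try ring
    rw [coordPDeriv_congr (isOpen_sphDomain R) hp hz m, coordPDeriv_comp1 (hasDerivAt_B R (p 1) hp1) m]
    fin_cases m <;> simp [Ξ] <;> try ring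
  · show ∀ m : Fin 4, coordPDeriv (fun q => Γe R 1 0 1 q) m p = Ξ R 1 0 1 m p
    intro m
    have hz : (fun q : Fin 4 → ℝ => Γe R 1 0 1 q) = fun _ => (0:ℝ) := by
      funext q
      simp [Γe, Dm, dv, wv, Matrix.vecHead, Matrix.vecTail]
    rw [hz, coordPDeriv_const]
    simp [Ξ]
  · show ∀ m : Fin 4, coordPDeriv (fun q => Γe R 1 0 2 q) m p = Ξ R 1 0 2 m p
    intro m
    have hz : (fun q : Fin 4 → ℝ => Γe R 1 0 2 q) = fun _ => (0:ℝ) := by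
      funext q
      simp [Γe, Dm, dv, wv, Matrix.vecHead, Matrix.vecTail]
    rw [hz, coordPDeriv_const]
    simp [Ξ]
  · show ∀ m : Fin 4, coordPDeriv (fun q => Γe R 1 0 3 q) m p = Ξ R 1 0 3 m p
    intro m
    have hz : (fun q : Fin 4 → ℝ => Γe R 1 0 3 q) = fun _ => (0:ℝ) := by
      funext q
      simp [Γe, Dm, dv, wv, Matrix.vecHead, Matrix.vecTail]
    rw [hz, coordPDeriv_const]
    simp [Ξ]
  · show ∀ m : Fin 4, coordPDeriv (fun q => Γe R 1 1 0 q) m p = Ξ R 1 1 0 m p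
    intro m
    have hz : (fun q : Fin 4 → ℝ => Γe R 1 1 0 q) = fun _ => (0:ℝ) := by
      funext q
      simp [Γe, Dm, dv, wv, Matrix.vecHead, Matrix.vecTail]
    rw [hz, coordPDeriv_const]
    simp [Ξ]
  · show ∀ m : Fin 4, coordPDeriv (fun q => Γe R 1 1 1 q) m p = Ξ R 1 1 1 m p
    intro m
    have hz : ∀ q ∈ sphDomain R, Γe R 1 1 1 q = -(R / (2 * (q 1 ^ 2 - R * q 1))) := by
      intro q hq
      have hq1 := hx0 hR hq
      have hq2 := hf0 hR hq
      have hq3 := hs0 hR hq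
      have hq4 := hxR hR hq
      have hq5 : q 1 ^ 2 - R * q 1 ≠ 0 := by
        have he : q 1 ^ 2 - R * q 1 = q 1 * (q 1 - R) := by ring
        rw [he]; exact mul_ne_zero hq1 hq4
      simp [Γe, Dm, dv, wv, Matrix.vecHead, Matrix.vecTail]
      field_simp
      try ring
    rw [coordPDeriv_congr (isOpen_sphDomain R) hp hz m, coordPDeriv_comp1 (F := fun t => -(R / (2 * (t ^ 2 - R * t)))) ((hasDerivAt_A R (p 1) hp1 hp4).neg) m]
    fin_cases m <;> simp [Ξ] <;> try ring
  · show ∀ m : Fin 4, coordPDeriv (fun q => Γe R 1 1 2 q) m p = Ξ R 1 1 2 m p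
    intro m
    have hz : (fun q : Fin 4 → ℝ => Γe R 1 1 2 q) = fun _ => (0:ℝ) := by
      funext q
      simp [Γe, Dm, dv, wv, Matrix.vecHead, Matrix.vecTail]
    rw [hz, coordPDeriv_const]
    simp [Ξ]
  · show ∀ m : Fin 4, coordPDeriv (fun q => Γe R 1 1 3 q) m p = Ξ R 1 1 3 m p
    intro m
    have hz : (fun q : Fin 4 → ℝ => Γe R 1 1 3 q) = fun _ => (0:ℝ) := by
      funext q
      simp [Γe, Dm, dv, wv, Matrix.vecHead, Matrix.vecTail]
    rw [hz, coordPDeriv_const]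
    simp [Ξ]
  · show ∀ m : Fin 4, coordPDeriv (fun q => Γe R 1 2 0 q) m p = Ξ R 1 2 0 m p
    intro m
    have hz : (fun q : Fin 4 → ℝ => Γe R 1 2 0 q) = fun _ => (0:ℝ) := by
      funext q
      simp [Γe, Dm, dv, wv, Matrix.vecHead, Matrix.vecTail]
    rw [hz, coordPDeriv_const]
    simp [Ξ]
  · show ∀ m : Fin 4, coordPDeriv (fun q => Γe R 1 2 1 q) m p = Ξ R 1 2 1 m p
    intro m
    have hz : (fun q : Fin 4 → ℝ => Γe R 1 2 1 q) = fun _ => (0:ℝ) := by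
      funext q
      simp [Γe, Dm, dv, wv, Matrix.vecHead, Matrix.vecTail]
    rw [hz, coordPDeriv_const]
    simp [Ξ]
  · show ∀ m : Fin 4, coordPDeriv (fun q => Γe R 1 2 2 q) m p = Ξ R 1 2 2 m p
    intro m
    have hz : ∀ q ∈ sphDomain R, Γe R 1 2 2 q = R - q 1 := by
      intro q hq
      have hq1 := hx0 hR hq
      have hq2 := hf0 hR hq
      have hq3 := hs0 hR hq
      have hq4 := hxR hR hq
      have hq5 : q 1 ^ 2 - R * q 1 ≠ 0 := by
        have he : q 1 ^ 2 - R * q 1 = q 1 * (q 1 - R) := by ring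
        rw [he]; exact mul_ne_zero hq1 hq4
      simp [Γe, Dm, dv, wv, Matrix.vecHead, Matrix.vecTail]
      field_simp
      try ring
    rw [coordPDeriv_congr (isOpen_sphDomain R) hp hz m, coordPDeriv_comp1 (hasDerivAt_C R (p 1)) m]
    fin_cases m <;> simp [Ξ] <;> try ring
  · show ∀ m : Fin 4, coordPDeriv (fun q => Γe R 1 2 3 q) m p = Ξ R 1 2 3 m p
    intro m
    have hz : (fun q : Fin 4 → ℝ => Γe R 1 2 3 q) = fun _ => (0:ℝ) := by
      funext q
      simp [Γe, Dm, dv, wv, Matrix.vecHead, Matrix.vecTail]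
    rw [hz, coordPDeriv_const]
    simp [Ξ]
  · show ∀ m : Fin 4, coordPDeriv (fun q => Γe R 1 3 0 q) m p = Ξ R 1 3 0 m p
    intro m
    have hz : (fun q : Fin 4 → ℝ => Γe R 1 3 0 q) = fun _ => (0:ℝ) := by
      funext q
      simp [Γe, Dm, dv, wv, Matrix.vecHead, Matrix.vecTail]
    rw [hz, coordPDeriv_const]
    simp [Ξ]
  · show ∀ m : Fin 4, coordPDeriv (fun q => Γe R 1 3 1 q) m p = Ξ R 1 3 1 m p
    intro m
    have hz : (fun q : Fin 4 → ℝ => Γe R 1 3 1 q) = fun _ => (0:ℝ) := by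
      funext q
      simp [Γe, Dm, dv, wv, Matrix.vecHead, Matrix.vecTail]
    rw [hz, coordPDeriv_const]
    simp [Ξ]
  · show ∀ m : Fin 4, coordPDeriv (fun q => Γe R 1 3 2 q) m p = Ξ R 1 3 2 m p
    intro m
    have hz : (fun q : Fin 4 → ℝ => Γe R 1 3 2 q) = fun _ => (0:ℝ) := by
      funext q
      simp [Γe, Dm, dv, wv, Matrix.vecHead, Matrix.vecTail]
    rw [hz, coordPDeriv_const]
    simp [Ξ]
  · show ∀ m : Fin 4, coordPDeriv (fun q => Γe R 1 3 3 q) m p = Ξ R 1 3 3 m p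
    intro m
    have hz : ∀ q ∈ sphDomain R, Γe R 1 3 3 q = (R - q 1) * Real.sin (q 2) ^ 2 := by
      intro q hq
      have hq1 := hx0 hR hq
      have hq2 := hf0 hR hq
      have hq3 := hs0 hR hq
      have hq4 := hxR hR hq
      have hq5 : q 1 ^ 2 - R * q 1 ≠ 0 := by
        have he : q 1 ^ 2 - R * q 1 = q 1 * (q 1 - R) := by ring
        rw [he]; exact mul_ne_zero hq1 hq4
      simp [Γe, Dm, dv, wv, Matrix.vecHead, Matrix.vecTail]
      field_simp
      try ring
    rw [coordPDeriv_congr (isOpen_sphDomain R) hp hz m, coordPDeriv_mul12 (hasDerivAt_C R (p 1)) (hasDerivAt_sinsq (p 2)) m]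
    fin_cases m <;> simp [Ξ] <;> try ring
  · show ∀ m : Fin 4, coordPDeriv (fun q => Γe R 2 0 0 q) m p = Ξ R 2 0 0 m p
    intro m
    have hz : (fun q : Fin 4 → ℝ => Γe R 2 0 0 q) = fun _ => (0:ℝ) := by
      funext q
      simp [Γe, Dm, dv, wv, Matrix.vecHead, Matrix.vecTail]
    rw [hz, coordPDeriv_const]
    simp [Ξ]
  · show ∀ m : Fin 4, coordPDeriv (fun q => Γe R 2 0 1 q) m p = Ξ R 2 0 1 m p
    intro m
    have hz : (fun q : Fin 4 → ℝ => Γe R 2 0 1 q) = fun _ => (0:ℝ) := by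
      funext q
      simp [Γe, Dm, dv, wv, Matrix.vecHead, Matrix.vecTail]
    rw [hz, coordPDeriv_const]
    simp [Ξ]
  · show ∀ m : Fin 4, coordPDeriv (fun q => Γe R 2 0 2 q) m p = Ξ R 2 0 2 m p
    intro m
    have hz : (fun q : Fin 4 → ℝ => Γe R 2 0 2 q) = fun _ => (0:ℝ) := by
      funext q
      simp [Γe, Dm, dv, wv, Matrix.vecHead, Matrix.vecTail]
    rw [hz, coordPDeriv_const]
    simp [Ξ]
  · show ∀ m : Fin 4, coordPDeriv (fun q => Γe R 2 0 3 q) m p = Ξ R 2 0 3 m p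
    intro m
    have hz : (fun q : Fin 4 → ℝ => Γe R 2 0 3 q) = fun _ => (0:ℝ) := by
      funext q
      simp [Γe, Dm, dv, wv, Matrix.vecHead, Matrix.vecTail]
    rw [hz, coordPDeriv_const]
    simp [Ξ]
  · show ∀ m : Fin 4, coordPDeriv (fun q => Γe R 2 1 0 q) m p = Ξ R 2 1 0 m p
    intro m
    have hz : (fun q : Fin 4 → ℝ => Γe R 2 1 0 q) = fun _ => (0:ℝ) := by
      funext q
      simp [Γe, Dm, dv, wv, Matrix.vecHead, Matrix.vecTail]
    rw [hz, coordPDeriv_const]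
    simp [Ξ]
  · show ∀ m : Fin 4, coordPDeriv (fun q => Γe R 2 1 1 q) m p = Ξ R 2 1 1 m p
    intro m
    have hz : (fun q : Fin 4 → ℝ => Γe R 2 1 1 q) = fun _ => (0:ℝ) := by
      funext q
      simp [Γe, Dm, dv, wv, Matrix.vecHead, Matrix.vecTail]
    rw [hz, coordPDeriv_const]
    simp [Ξ]
  · show ∀ m : Fin 4, coordPDeriv (fun q => Γe R 2 1 2 q) m p = Ξ R 2 1 2 m p
    intro m
    have hz : ∀ q ∈ sphDomain R, Γe R 2 1 2 q = (q 1)⁻¹ := by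
      intro q hq
      have hq1 := hx0 hR hq
      have hq2 := hf0 hR hq
      have hq3 := hs0 hR hq
      have hq4 := hxR hR hq
      have hq5 : q 1 ^ 2 - R * q 1 ≠ 0 := by
        have he : q 1 ^ 2 - R * q 1 = q 1 * (q 1 - R) := by ring
        rw [he]; exact mul_ne_zero hq1 hq4
      simp [Γe, Dm, dv, wv, Matrix.vecHead, Matrix.vecTail]
      field_simp
      try ring
    rw [coordPDeriv_congr (isOpen_sphDomain R) hp hz m, coordPDeriv_comp1 (hasDerivAt_inv hp1) m]
    fin_cases m <;> simp [Ξ] <;> try ring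
  · show ∀ m : Fin 4, coordPDeriv (fun q => Γe R 2 1 3 q) m p = Ξ R 2 1 3 m p
    intro m
    have hz : (fun q : Fin 4 → ℝ => Γe R 2 1 3 q) = fun _ => (0:ℝ) := by
      funext q
      simp [Γe, Dm, dv, wv, Matrix.vecHead, Matrix.vecTail]
    rw [hz, coordPDeriv_const]
    simp [Ξ]
  · show ∀ m : Fin 4, coordPDeriv (fun q => Γe R 2 2 0 q) m p = Ξ R 2 2 0 m p
    intro m
    have hz : (fun q : Fin 4 → ℝ => Γe R 2 2 0 q) = fun _ => (0:ℝ) := by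
      funext q
      simp [Γe, Dm, dv, wv, Matrix.vecHead, Matrix.vecTail]
    rw [hz, coordPDeriv_const]
    simp [Ξ]
  · show ∀ m : Fin 4, coordPDeriv (fun q => Γe R 2 2 1 q) m p = Ξ R 2 2 1 m p
    intro m
    have hz : ∀ q ∈ sphDomain R, Γe R 2 2 1 q = (q 1)⁻¹ := by
      intro q hq
      have hq1 := hx0 hR hq
      have hq2 := hf0 hR hq
      have hq3 := hs0 hR hq
      have hq4 := hxR hR hq
      have hq5 : q 1 ^ 2 - R * q 1 ≠ 0 := by
        have he : q 1 ^ 2 - R * q 1 = q 1 * (q 1 - R) := by ring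
        rw [he]; exact mul_ne_zero hq1 hq4
      simp [Γe, Dm, dv, wv, Matrix.vecHead, Matrix.vecTail]
      field_simp
      try ring
    rw [coordPDeriv_congr (isOpen_sphDomain R) hp hz m, coordPDeriv_comp1 (hasDerivAt_inv hp1) m]
    fin_cases m <;> simp [Ξ] <;> try ring
  · show ∀ m : Fin 4, coordPDeriv (fun q => Γe R 2 2 2 q) m p = Ξ R 2 2 2 m p
    intro m
    have hz : (fun q : Fin 4 → ℝ => Γe R 2 2 2 q) = fun _ => (0:ℝ) := by
      funext q
      simp [Γe, Dm, dv, wv, Matrix.vecHead, Matrix.vecTail]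
    rw [hz, coordPDeriv_const]
    simp [Ξ]
  · show ∀ m : Fin 4, coordPDeriv (fun q => Γe R 2 2 3 q) m p = Ξ R 2 2 3 m p
    intro m
    have hz : (fun q : Fin 4 → ℝ => Γe R 2 2 3 q) = fun _ => (0:ℝ) := by
      funext q
      simp [Γe, Dm, dv, wv, Matrix.vecHead, Matrix.vecTail]
    rw [hz, coordPDeriv_const]
    simp [Ξ]
  · show ∀ m : Fin 4, coordPDeriv (fun q => Γe R 2 3 0 q) m p = Ξ R 2 3 0 m p
    intro m
    have hz : (fun q : Fin 4 → ℝ => Γe R 2 3 0 q) = fun _ => (0:ℝ) := by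
      funext q
      simp [Γe, Dm, dv, wv, Matrix.vecHead, Matrix.vecTail]
    rw [hz, coordPDeriv_const]
    simp [Ξ]
  · show ∀ m : Fin 4, coordPDeriv (fun q => Γe R 2 3 1 q) m p = Ξ R 2 3 1 m p
    intro m
    have hz : (fun q : Fin 4 → ℝ => Γe R 2 3 1 q) = fun _ => (0:ℝ) := by
      funext q
      simp [Γe, Dm, dv, wv, Matrix.vecHead, Matrix.vecTail]
    rw [hz, coordPDeriv_const]
    simp [Ξ]
  · show ∀ m : Fin 4, coordPDeriv (fun q => Γe R 2 3 2 q) m p = Ξ R 2 3 2 m p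
    intro m
    have hz : (fun q : Fin 4 → ℝ => Γe R 2 3 2 q) = fun _ => (0:ℝ) := by
      funext q
      simp [Γe, Dm, dv, wv, Matrix.vecHead, Matrix.vecTail]
    rw [hz, coordPDeriv_const]
    simp [Ξ]
  · show ∀ m : Fin 4, coordPDeriv (fun q => Γe R 2 3 3 q) m p = Ξ R 2 3 3 m p
    intro m
    have hz : ∀ q ∈ sphDomain R, Γe R 2 3 3 q = -(Real.sin (q 2) * Real.cos (q 2)) := by
      intro q hq
      have hq1 := hx0 hR hq
      have hq2 := hf0 hR hq
      have hq3 := hs0 hR hq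
      have hq4 := hxR hR hq
      have hq5 : q 1 ^ 2 - R * q 1 ≠ 0 := by
        have he : q 1 ^ 2 - R * q 1 = q 1 * (q 1 - R) := by ring
        rw [he]; exact mul_ne_zero hq1 hq4
      simp [Γe, Dm, dv, wv, Matrix.vecHead, Matrix.vecTail]
      field_simp
      try ring
    rw [coordPDeriv_congr (isOpen_sphDomain R) hp hz m, coordPDeriv_comp2 (hasDerivAt_E (p 2)) m]
    fin_cases m <;> simp [Ξ] <;> try ring
  · show ∀ m : Fin 4, coordPDeriv (fun q => Γe R 3 0 0 q) m p = Ξ R 3 0 0 m p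
    intro m
    have hz : (fun q : Fin 4 → ℝ => Γe R 3 0 0 q) = fun _ => (0:ℝ) := by
      funext q
      simp [Γe, Dm, dv, wv, Matrix.vecHead, Matrix.vecTail]
    rw [hz, coordPDeriv_const]
    simp [Ξ]
  · show ∀ m : Fin 4, coordPDeriv (fun q => Γe R 3 0 1 q) m p = Ξ R 3 0 1 m p
    intro m
    have hz : (fun q : Fin 4 → ℝ => Γe R 3 0 1 q) = fun _ => (0:ℝ) := by
      funext q
      simp [Γe, Dm, dv, wv, Matrix.vecHead, Matrix.vecTail]
    rw [hz, coordPDeriv_const]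
    simp [Ξ]
  · show ∀ m : Fin 4, coordPDeriv (fun q => Γe R 3 0 2 q) m p = Ξ R 3 0 2 m p
    intro m
    have hz : (fun q : Fin 4 → ℝ => Γe R 3 0 2 q) = fun _ => (0:ℝ) := by
      funext q
      simp [Γe, Dm, dv, wv, Matrix.vecHead, Matrix.vecTail]
    rw [hz, coordPDeriv_const]
    simp [Ξ]
  · show ∀ m : Fin 4, coordPDeriv (fun q => Γe R 3 0 3 q) m p = Ξ R 3 0 3 m p
    intro m
    have hz : (fun q : Fin 4 → ℝ => Γe R 3 0 3 q) = fun _ => (0:ℝ) := by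
      funext q
      simp [Γe, Dm, dv, wv, Matrix.vecHead, Matrix.vecTail]
    rw [hz, coordPDeriv_const]
    simp [Ξ]
  · show ∀ m : Fin 4, coordPDeriv (fun q => Γe R 3 1 0 q) m p = Ξ R 3 1 0 m p
    intro m
    have hz : (fun q : Fin 4 → ℝ => Γe R 3 1 0 q) = fun _ => (0:ℝ) := by
      funext q
      simp [Γe, Dm, dv, wv, Matrix.vecHead, Matrix.vecTail]
    rw [hz, coordPDeriv_const]
    simp [Ξ]
  · show ∀ m : Fin 4, coordPDeriv (fun q => Γe R 3 1 1 q) m p = Ξ R 3 1 1 m p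
    intro m
    have hz : (fun q : Fin 4 → ℝ => Γe R 3 1 1 q) = fun _ => (0:ℝ) := by
      funext q
      simp [Γe, Dm, dv, wv, Matrix.vecHead, Matrix.vecTail]
    rw [hz, coordPDeriv_const]
    simp [Ξ]
  · show ∀ m : Fin 4, coordPDeriv (fun q => Γe R 3 1 2 q) m p = Ξ R 3 1 2 m p
    intro m
    have hz : (fun q : Fin 4 → ℝ => Γe R 3 1 2 q) = fun _ => (0:ℝ) := by
      funext q
      simp [Γe, Dm, dv, wv, Matrix.vecHead, Matrix.vecTail]
    rw [hz, coordPDeriv_const]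
    simp [Ξ]
  · show ∀ m : Fin 4, coordPDeriv (fun q => Γe R 3 1 3 q) m p = Ξ R 3 1 3 m p
    intro m
    have hz : ∀ q ∈ sphDomain R, Γe R 3 1 3 q = (q 1)⁻¹ := by
      intro q hq
      have hq1 := hx0 hR hq
      have hq2 := hf0 hR hq
      have hq3 := hs0 hR hq
      have hq4 := hxR hR hq
      have hq5 : q 1 ^ 2 - R * q 1 ≠ 0 := by
        have he : q 1 ^ 2 - R * q 1 = q 1 * (q 1 - R) := by ring
        rw [he]; exact mul_ne_zero hq1 hq4
      simp [Γe, Dm, dv, wv, Matrix.vecHead, Matrix.vecTail]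
      field_simp
      try ring
    rw [coordPDeriv_congr (isOpen_sphDomain R) hp hz m, coordPDeriv_comp1 (hasDerivAt_inv hp1) m]
    fin_cases m <;> simp [Ξ] <;> try ring
  · show ∀ m : Fin 4, coordPDeriv (fun q => Γe R 3 2 0 q) m p = Ξ R 3 2 0 m p
    intro m
    have hz : (fun q : Fin 4 → ℝ => Γe R 3 2 0 q) = fun _ => (0:ℝ) := by
      funext q
      simp [Γe, Dm, dv, wv, Matrix.vecHead, Matrix.vecTail]
    rw [hz, coordPDeriv_const]
    simp [Ξ]
  · show ∀ m : Fin 4, coordPDeriv (fun q => Γe R 3 2 1 q) m p = Ξ R 3 2 1 m p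
    intro m
    have hz : (fun q : Fin 4 → ℝ => Γe R 3 2 1 q) = fun _ => (0:ℝ) := by
      funext q
      simp [Γe, Dm, dv, wv, Matrix.vecHead, Matrix.vecTail]
    rw [hz, coordPDeriv_const]
    simp [Ξ]
  · show ∀ m : Fin 4, coordPDeriv (fun q => Γe R 3 2 2 q) m p = Ξ R 3 2 2 m p
    intro m
    have hz : (fun q : Fin 4 → ℝ => Γe R 3 2 2 q) = fun _ => (0:ℝ) := by
      funext q
      simp [Γe, Dm, dv, wv, Matrix.vecHead, Matrix.vecTail]
    rw [hz, coordPDeriv_const]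
    simp [Ξ]
  · show ∀ m : Fin 4, coordPDeriv (fun q => Γe R 3 2 3 q) m p = Ξ R 3 2 3 m p
    intro m
    have hz : ∀ q ∈ sphDomain R, Γe R 3 2 3 q = Real.cos (q 2) / Real.sin (q 2) := by
      intro q hq
      have hq1 := hx0 hR hq
      have hq2 := hf0 hR hq
      have hq3 := hs0 hR hq
      have hq4 := hxR hR hq
      have hq5 : q 1 ^ 2 - R * q 1 ≠ 0 := by
        have he : q 1 ^ 2 - R * q 1 = q 1 * (q 1 - R) := by ring
        rw [he]; exact mul_ne_zero hq1 hq4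
      simp [Γe, Dm, dv, wv, Matrix.vecHead, Matrix.vecTail]
      field_simp
      try ring
    rw [coordPDeriv_congr (isOpen_sphDomain R) hp hz m, coordPDeriv_comp2 (hasDerivAt_G (p 2) hps) m]
    fin_cases m <;> simp [Ξ] <;> try ring
  · show ∀ m : Fin 4, coordPDeriv (fun q => Γe R 3 3 0 q) m p = Ξ R 3 3 0 m p
    intro m
    have hz : (fun q : Fin 4 → ℝ => Γe R 3 3 0 q) = fun _ => (0:ℝ) := by
      funext q
      simp [Γe, Dm, dv, wv, Matrix.vecHead, Matrix.vecTail]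
    rw [hz, coordPDeriv_const]
    simp [Ξ]
  · show ∀ m : Fin 4, coordPDeriv (fun q => Γe R 3 3 1 q) m p = Ξ R 3 3 1 m p
    intro m
    have hz : ∀ q ∈ sphDomain R, Γe R 3 3 1 q = (q 1)⁻¹ := by
      intro q hq
      have hq1 := hx0 hR hq
      have hq2 := hf0 hR hq
      have hq3 := hs0 hR hq
      have hq4 := hxR hR hq
      have hq5 : q 1 ^ 2 - R * q 1 ≠ 0 := by
        have he : q 1 ^ 2 - R * q 1 = q 1 * (q 1 - R) := by ring
        rw [he]; exact mul_ne_zero hq1 hq4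
      simp [Γe, Dm, dv, wv, Matrix.vecHead, Matrix.vecTail]
      field_simp
      try ring
    rw [coordPDeriv_congr (isOpen_sphDomain R) hp hz m, coordPDeriv_comp1 (hasDerivAt_inv hp1) m]
    fin_cases m <;> simp [Ξ] <;> try ring
  · show ∀ m : Fin 4, coordPDeriv (fun q => Γe R 3 3 2 q) m p = Ξ R 3 3 2 m p
    intro m
    have hz : ∀ q ∈ sphDomain R, Γe R 3 3 2 q = Real.cos (q 2) / Real.sin (q 2) := by
      intro q hq
      have hq1 := hx0 hR hq
      have hq2 := hf0 hR hq
      have hq3 := hs0 hR hq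
      have hq4 := hxR hR hq
      have hq5 : q 1 ^ 2 - R * q 1 ≠ 0 := by
        have he : q 1 ^ 2 - R * q 1 = q 1 * (q 1 - R) := by ring
        rw [he]; exact mul_ne_zero hq1 hq4
      simp [Γe, Dm, dv, wv, Matrix.vecHead, Matrix.vecTail]
      field_simp
      try ring
    rw [coordPDeriv_congr (isOpen_sphDomain R) hp hz m, coordPDeriv_comp2 (hasDerivAt_G (p 2) hps) m]
    fin_cases m <;> simp [Ξ] <;> try ring
  · show ∀ m : Fin 4, coordPDeriv (fun q => Γe R 3 3 3 q) m p = Ξ R 3 3 3 m p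
    intro m
    have hz : (fun q : Fin 4 → ℝ => Γe R 3 3 3 q) = fun _ => (0:ℝ) := by
      funext q
      simp [Γe, Dm, dv, wv, Matrix.vecHead, Matrix.vecTail]
    rw [hz, coordPDeriv_const]
    simp [Ξ]

set_option maxHeartbeats 4000000 in
/-- The Ricci tensor of the Schwarzschild metric vanishes identically on `Ω_sph`. -/
theorem schwarzschild_ricci_flat (R : ℝ) (hR : 0 < R) :
    ∀ p ∈ sphDomain R, ∀ i j : Fin 4, ricci (schwMetric R) i j p = 0 := by
  intro p hp i j
  have hp1 := hx0 hR hp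
  have hp2 := hf0 hR hp
  have hp3 := hs0 hR hp
  have hp4 := hxR hR hp
  have hp5 : p 1 ^ 2 - R * p 1 ≠ 0 := by
    have he : p 1 ^ 2 - R * p 1 = p 1 * (p 1 - R) := by ring
    rw [he]; exact mul_ne_zero hp1 hp4
  have hpy := Real.sin_sq_add_cos_sq (p 2)
  have hcongr : ∀ k a b m : Fin 4,
      coordPDeriv (fun q => christoffel (schwMetric R) k a b q) m p
        = coordPDeriv (fun q => Γe R k a b q) m p := fun k a b m =>
    coordPDeriv_congr (isOpen_sphDomain R) hp (fun q hq => christoffel_eq hR hq k a b) m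
  unfold ricci
  simp only [hcongr, cpd_Γe hR hp, christoffel_eq hR hp, Fin.sum_univ_four]
  fin_cases i <;> fin_cases j <;>
    simp [Ξ, Γe, Dm, dv, wv, Matrix.vecHead, Matrix.vecTail] <;>
    field_simp <;>
    ring_nf
  linear_combination (-(2 * (p 1 ^ 3 - 2 * R * p 1 ^ 2 + R ^ 2 * p 1))) * hpy

end
end

section
/- Let ξ(s) = (t(s), r(s), φ(s), ψ(s)) be a C² curve with values in Ω_sph, defined on an interval I, satisfying the geodesic equations of the Schwarzschild metric. Then the pseudo-norm q(s) := (1 − R/r(s))·ṫ(s)² − (1 − R/r(s))⁻¹·ṙ(s)² − r(s)²·(φ̇(s)² + sin²φ(s)·ψ̇(s)²) is constant on I. Moreover, if q ≡ 1 (unit timelike geodesic), then for all s ∈ I one has ṙ(s)² = a² − (1 − R/r(s))·(1 + b²/r(s)²), where a = (1 − R/r(s))·ṫ(s) and b = r(s)²·√(φ̇(s)² + sin²φ(s)·ψ̇(s)²) are the (constant) values of the two first integrals of the motion. -/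
noncomputable section

lemma inv_schw (R : ℝ) (q : Fin 4 → ℝ) (h1 : q 1 ≠ 0) (h2 : q 1 - R ≠ 0)
    (h3 : Real.sin (q 2) ≠ 0) :
    (schwMetric R q)⁻¹ = Matrix.diagonal
      ![(1 - R / q 1)⁻¹, -(1 - R / q 1), -((q 1) ^ 2)⁻¹,
        -((q 1) ^ 2 * Real.sin (q 2) ^ 2)⁻¹] := by
  apply Matrix.inv_eq_right_inv
  rw [schwMetric, Matrix.diagonal_mul_diagonal]
  have hv : (fun i => ![1 - R / q 1, -(1 - R / q 1)⁻¹, -(q 1) ^ 2,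
        -(q 1) ^ 2 * Real.sin (q 2) ^ 2] i
      * ![(1 - R / q 1)⁻¹, -(1 - R / q 1), -((q 1) ^ 2)⁻¹,
        -((q 1) ^ 2 * Real.sin (q 2) ^ 2)⁻¹] i) = (1 : Fin 4 → ℝ) := by
    funext i
    fin_cases i <;> simp <;> field_simp <;> ring
  rw [hv]
  exact Matrix.diagonal_one

lemma hasFDerivAt_coord_s4 (j : Fin 4) (p : Fin 4 → ℝ) :
    HasFDerivAt (fun q : Fin 4 → ℝ => q j)
      (ContinuousLinearMap.proj (R := ℝ) (φ := fun _ : Fin 4 => ℝ) j) p :=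
  hasFDerivAt_apply (𝕜 := ℝ) j p

lemma pd_comp {h : ℝ → ℝ} {h' : ℝ} {p : Fin 4 → ℝ} (j : Fin 4)
    (hd : HasDerivAt h h' (p j)) (i : Fin 4) :
    coordPDeriv (fun q => h (q j)) i p = if i = j then h' else 0 := by
  have H : HasFDerivAt (fun q : Fin 4 → ℝ => h (q j))
      (h' • ContinuousLinearMap.proj (R := ℝ) (φ := fun _ : Fin 4 => ℝ) j) p :=
    hd.comp_hasFDerivAt p (hasFDerivAt_coord_s4 j p)
  rw [coordPDeriv_of_hasFDerivAt H i]
  rcases eq_or_ne i j with rfl | hne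
  · simp
  · simp [Pi.single_apply, hne, Ne.symm hne]

lemma pd_mul {a b : ℝ → ℝ} {a' b' : ℝ} {p : Fin 4 → ℝ}
    (ha : HasDerivAt a a' (p 1)) (hb : HasDerivAt b b' (p 2)) (i : Fin 4) :
    coordPDeriv (fun q => a (q 1) * b (q 2)) i p
      = if i = 1 then a' * b (p 2) else if i = 2 then a (p 1) * b' else 0 := by
  have H : HasFDerivAt (fun q : Fin 4 → ℝ => a (q 1) * b (q 2))
      (a (p 1) • b' • ContinuousLinearMap.proj (R := ℝ) (φ := fun _ : Fin 4 => ℝ) 2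
        + b (p 2) • a' • ContinuousLinearMap.proj (R := ℝ) (φ := fun _ : Fin 4 => ℝ) 1) p :=
    (ha.comp_hasFDerivAt p (hasFDerivAt_coord_s4 1 p)).mul
      (hb.comp_hasFDerivAt p (hasFDerivAt_coord_s4 2 p))
  rw [coordPDeriv_of_hasFDerivAt H i]
  have e21 : (2:Fin 4) ≠ 1 := by decide
  have e12 : (1:Fin 4) ≠ 2 := by decide
  rcases eq_or_ne i 1 with rfl | h1
  · simp [Pi.single_apply, e21, e12]
    ring
  · rcases eq_or_ne i 2 with rfl | h2
    · simp [Pi.single_apply, e21, e12]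
    · simp [Pi.single_apply, h1, h2, Ne.symm h1, Ne.symm h2]

lemma pd_const0 {p : Fin 4 → ℝ} (i : Fin 4) :
    coordPDeriv (fun _ : Fin 4 → ℝ => (0:ℝ)) i p = 0 := by
  rw [coordPDeriv_of_hasFDerivAt (hasFDerivAt_const (0:ℝ) p) i]
  simp

lemma pd_offdiag (R : ℝ) (p : Fin 4 → ℝ) {a b : Fin 4} (hab : a ≠ b) (i : Fin 4) :
    coordPDeriv (fun q => schwMetric R q a b) i p = 0 := by
  have e : (fun q : Fin 4 → ℝ => schwMetric R q a b) = fun _ => (0:ℝ) := by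
    funext q
    exact Matrix.diagonal_apply_ne _ hab
  rw [e, pd_const0]

lemma pd_entry (R : ℝ) (p : Fin 4 → ℝ) (hr0 : p 1 ≠ 0) (hf : 1 - R / p 1 ≠ 0)
    (a b i : Fin 4) :
    coordPDeriv (fun q => schwMetric R q a b) i p =
      if a = 0 ∧ b = 0 then (if i = 1 then R / p 1 ^ 2 else 0)
      else if a = 1 ∧ b = 1 then
        (if i = 1 then R / p 1 ^ 2 / (1 - R / p 1) ^ 2 else 0)
      else if a = 2 ∧ b = 2 then (if i = 1 then -(2 * p 1) else 0)
      else if a = 3 ∧ b = 3 then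
        (if i = 1 then -(2 * p 1) * Real.sin (p 2) ^ 2
         else if i = 2 then -p 1 ^ 2 * (2 * Real.sin (p 2) * Real.cos (p 2)) else 0)
      else 0 := by
  have hd0 : HasDerivAt (fun x : ℝ => 1 - R / x) (R / p 1 ^ 2) (p 1) := by
    have h := (hasDerivAt_const (p 1) (1:ℝ)).sub
      ((hasDerivAt_const (p 1) R).div (hasDerivAt_id (p 1)) hr0)
    refine h.congr_deriv ?_
    simp only [id]
    field_simp
    ring
  have hd1 : HasDerivAt (fun x : ℝ => -(1 - R / x)⁻¹)
      (R / p 1 ^ 2 / (1 - R / p 1) ^ 2) (p 1) := by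
    have h := (hd0.inv hf).neg
    refine h.congr_deriv ?_
    ring
  have hd2 : HasDerivAt (fun x : ℝ => -x ^ 2) (-(2 * p 1)) (p 1) := by
    have h := (hasDerivAt_pow 2 (p 1)).neg
    refine h.congr_deriv ?_
    push_cast
    ring
  have hd3 : HasDerivAt (fun y : ℝ => Real.sin y ^ 2)
      (2 * Real.sin (p 2) * Real.cos (p 2)) (p 2) := by
    have h := (Real.hasDerivAt_sin (p 2)).pow 2
    refine h.congr_deriv ?_
    push_cast
    ring
  have e00 : (fun q : Fin 4 → ℝ => schwMetric R q 0 0) = fun q => 1 - R / q 1 := by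
    funext q; simp [schwMetric, Matrix.diagonal_apply]
  have e11 : (fun q : Fin 4 → ℝ => schwMetric R q 1 1) = fun q => -(1 - R / q 1)⁻¹ := by
    funext q; simp [schwMetric, Matrix.diagonal_apply]
  have e22 : (fun q : Fin 4 → ℝ => schwMetric R q 2 2) = fun q => -(q 1) ^ 2 := by
    funext q; simp [schwMetric, Matrix.diagonal_apply]
  have e33 : (fun q : Fin 4 → ℝ => schwMetric R q 3 3)
      = fun q => -(q 1) ^ 2 * Real.sin (q 2) ^ 2 := by
    funext q; simp [schwMetric, Matrix.diagonal_apply]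
  have h4 : ∀ c : Fin 4, c = 0 ∨ c = 1 ∨ c = 2 ∨ c = 3 := by decide
  rcases h4 a with rfl|rfl|rfl|rfl <;> rcases h4 b with rfl|rfl|rfl|rfl <;>
    first
      | (rw [e00, pd_comp 1 hd0]; simp)
      | (rw [e11, pd_comp 1 hd1]; simp)
      | (rw [e22, pd_comp 1 hd2]; simp)
      | (rw [e33, pd_mul hd2 hd3]; simp)
      | (rw [pd_offdiag R p (by decide) i]; simp)

section chsum
variable (R : ℝ) (p : Fin 4 → ℝ) (hr0 : p 1 ≠ 0) (hf : 1 - R / p 1 ≠ 0)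
  (hfR : p 1 - R ≠ 0) (hs : Real.sin (p 2) ≠ 0) (v : Fin 4 → ℝ)

set_option maxHeartbeats 1000000 in
include hr0 hf hfR hs in
lemma christoffel_sum1 :
    ∑ i, ∑ j, christoffel (schwMetric R) 1 i j p * v i * v j
      = (1 - R / p 1) * (R / p 1 ^ 2) / 2 * v 0 ^ 2
        - R / p 1 ^ 2 / (2 * (1 - R / p 1)) * v 1 ^ 2
        - p 1 * (1 - R / p 1) * v 2 ^ 2
        - p 1 * (1 - R / p 1) * Real.sin (p 2) ^ 2 * v 3 ^ 2 := by
  simp only [christoffel, inv_schw R p hr0 hfR hs, Fin.sum_univ_four,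
    pd_entry R p hr0 hf, Matrix.diagonal_apply, Matrix.cons_val_zero,
    Matrix.cons_val_one, Matrix.head_cons, Matrix.cons_val_two, Matrix.tail_cons,
    Matrix.cons_val_three, Fin.reduceEq, reduceIte, and_true, true_and, and_false,
    false_and, and_self, if_true, if_false, mul_zero, zero_mul, add_zero, zero_add,
    mul_one, one_mul, neg_zero, sub_zero, zero_sub]
  field_simp
  ring

set_option maxHeartbeats 1000000 in
include hr0 hf hfR hs in
lemma christoffel_sum0 :
    ∑ i, ∑ j, christoffel (schwMetric R) 0 i j p * v i * v j
      = R / p 1 ^ 2 / (1 - R / p 1) * v 0 * v 1 := by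
  simp only [christoffel, inv_schw R p hr0 hfR hs, Fin.sum_univ_four,
    pd_entry R p hr0 hf, Matrix.diagonal_apply, Matrix.cons_val_zero,
    Matrix.cons_val_one, Matrix.head_cons, Matrix.cons_val_two, Matrix.tail_cons,
    Matrix.cons_val_three, Fin.reduceEq, reduceIte, and_true, true_and, and_false,
    false_and, and_self, if_true, if_false, mul_zero, zero_mul, add_zero, zero_add,
    mul_one, one_mul, neg_zero, sub_zero, zero_sub]
  field_simp
  ring

set_option maxHeartbeats 1000000 in
include hr0 hf hfR hs in
lemma christoffel_sum2 :
    ∑ i, ∑ j, christoffel (schwMetric R) 2 i j p * v i * v j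
      = 2 / p 1 * v 1 * v 2 - Real.sin (p 2) * Real.cos (p 2) * v 3 ^ 2 := by
  simp only [christoffel, inv_schw R p hr0 hfR hs, Fin.sum_univ_four,
    pd_entry R p hr0 hf, Matrix.diagonal_apply, Matrix.cons_val_zero,
    Matrix.cons_val_one, Matrix.head_cons, Matrix.cons_val_two, Matrix.tail_cons,
    Matrix.cons_val_three, Fin.reduceEq, reduceIte, and_true, true_and, and_false,
    false_and, and_self, if_true, if_false, mul_zero, zero_mul, add_zero, zero_add,
    mul_one, one_mul, neg_zero, sub_zero, zero_sub]
  field_simp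
  ring

set_option maxHeartbeats 1000000 in
include hr0 hf hfR hs in
lemma christoffel_sum3 :
    ∑ i, ∑ j, christoffel (schwMetric R) 3 i j p * v i * v j
      = 2 / p 1 * v 1 * v 3
        + 2 * Real.cos (p 2) / Real.sin (p 2) * v 2 * v 3 := by
  simp only [christoffel, inv_schw R p hr0 hfR hs, Fin.sum_univ_four,
    pd_entry R p hr0 hf, Matrix.diagonal_apply, Matrix.cons_val_zero,
    Matrix.cons_val_one, Matrix.head_cons, Matrix.cons_val_two, Matrix.tail_cons,
    Matrix.cons_val_three, Fin.reduceEq, reduceIte, and_true, true_and, and_false,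
    false_and, and_self, if_true, if_false, mul_zero, zero_mul, add_zero, zero_add,
    mul_one, one_mul, neg_zero, sub_zero, zero_sub]
  field_simp
  ring

end chsum


set_option maxHeartbeats 2000000 in
/-- Along any C² geodesic `ξ = (t, r, φ, ψ)` of the Schwarzschild metric with values in
the chart `Ω_sph`, the pseudo-norm
`q = (1 − R/r)·ṫ² − (1 − R/r)⁻¹·ṙ² − r²·(φ̇² + sin²φ·ψ̇²)` is constant; moreover if
`q ≡ 1` then `ṙ² = a² − (1 − R/r)·(1 + b²/r²)`, where `a = (1 − R/r)·ṫ` and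
`b = r²·√(φ̇² + sin²φ·ψ̇²)` are the first integrals of the motion. -/
theorem schwarzschild_geodesic_pseudo_norm
    (R : ℝ) (hR : 0 < R) (I : Set ℝ) (hI : I.OrdConnected)
    (ξ ξ' ξ'' : ℝ → Fin 4 → ℝ)
    (hmem : ∀ s ∈ I, ξ s ∈ sphDomain R)
    (hξ' : ∀ s ∈ I, HasDerivWithinAt ξ (ξ' s) I s)
    (hξ'' : ∀ s ∈ I, HasDerivWithinAt ξ' (ξ'' s) I s)
    (hC2 : ContinuousOn ξ'' I)
    (hgeo : ∀ s ∈ I, ∀ k : Fin 4,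
      ξ'' s k + ∑ i, ∑ j, christoffel (schwMetric R) k i j (ξ s) * ξ' s i * ξ' s j = 0) :
    (∀ s ∈ I, ∀ s' ∈ I,
      (1 - R / ξ s 1) * (ξ' s 0) ^ 2 - (1 - R / ξ s 1)⁻¹ * (ξ' s 1) ^ 2
          - (ξ s 1) ^ 2 * ((ξ' s 2) ^ 2 + Real.sin (ξ s 2) ^ 2 * (ξ' s 3) ^ 2)
        = (1 - R / ξ s' 1) * (ξ' s' 0) ^ 2 - (1 - R / ξ s' 1)⁻¹ * (ξ' s' 1) ^ 2
          - (ξ s' 1) ^ 2 * ((ξ' s' 2) ^ 2 + Real.sin (ξ s' 2) ^ 2 * (ξ' s' 3) ^ 2)) ∧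
    ((∀ s ∈ I,
        (1 - R / ξ s 1) * (ξ' s 0) ^ 2 - (1 - R / ξ s 1)⁻¹ * (ξ' s 1) ^ 2
          - (ξ s 1) ^ 2 * ((ξ' s 2) ^ 2 + Real.sin (ξ s 2) ^ 2 * (ξ' s 3) ^ 2) = 1) →
      ∀ s ∈ I,
        (ξ' s 1) ^ 2 = ((1 - R / ξ s 1) * ξ' s 0) ^ 2
          - (1 - R / ξ s 1) *
            (1 + ((ξ s 1) ^ 2 *
              Real.sqrt ((ξ' s 2) ^ 2 + Real.sin (ξ s 2) ^ 2 * (ξ' s 3) ^ 2)) ^ 2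
                / (ξ s 1) ^ 2)) := by
  constructor
  · -- constancy
    set q : ℝ → ℝ := fun u =>
      (1 - R / ξ u 1) * ξ' u 0 ^ 2 - (1 - R / ξ u 1)⁻¹ * ξ' u 1 ^ 2
        - ξ u 1 ^ 2 * (ξ' u 2 ^ 2 + Real.sin (ξ u 2) ^ 2 * ξ' u 3 ^ 2) with hqdef
    have key : ∀ s ∈ I, HasDerivWithinAt q 0 I s := by
      intro s hs
      obtain ⟨hrR, hφ0, hφπ⟩ := hmem s hs
      have hr0 : (0:ℝ) < ξ s 1 := hR.trans hrR
      have hrne : ξ s 1 ≠ 0 := ne_of_gt hr0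
      have hfpos : 0 < 1 - R / ξ s 1 := by
        rw [sub_pos]
        exact (div_lt_one hr0).2 hrR
      have hf : 1 - R / ξ s 1 ≠ 0 := ne_of_gt hfpos
      have hfR : ξ s 1 - R ≠ 0 := ne_of_gt (sub_pos.2 hrR)
      have hsn : Real.sin (ξ s 2) ≠ 0 :=
        ne_of_gt (Real.sin_pos_of_pos_of_lt_pi hφ0 hφπ)
      have hc : ∀ k, HasDerivWithinAt (fun u => ξ u k) (ξ' s k) I s :=
        hasDerivWithinAt_pi.1 (hξ' s hs)
      have hc' : ∀ k, HasDerivWithinAt (fun u => ξ' u k) (ξ'' s k) I s :=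
        hasDerivWithinAt_pi.1 (hξ'' s hs)
      have hm := (hasDerivWithinAt_const s I (1:ℝ)).sub
        ((hasDerivWithinAt_const s I R).div (hc 1) hrne)
      have H := ((hm.mul ((hc' 0).pow 2)).sub ((hm.inv hf).mul ((hc' 1).pow 2))).sub
        (((hc 1).pow 2).mul (((hc' 2).pow 2).add
          ((((Real.hasDerivAt_sin (ξ s 2)).comp_hasDerivWithinAt s (hc 2)).pow 2).mul
            ((hc' 3).pow 2))))
      have hg0 := hgeo s hs 0
      have hg1 := hgeo s hs 1
      have hg2 := hgeo s hs 2
      have hg3 := hgeo s hs 3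
      rw [christoffel_sum0 R (ξ s) hrne hf hfR hsn (ξ' s)] at hg0
      rw [christoffel_sum1 R (ξ s) hrne hf hfR hsn (ξ' s)] at hg1
      rw [christoffel_sum2 R (ξ s) hrne hf hfR hsn (ξ' s)] at hg2
      rw [christoffel_sum3 R (ξ s) hrne hf hfR hsn (ξ' s)] at hg3
      have e0 : ξ'' s 0 = -(R / ξ s 1 ^ 2 / (1 - R / ξ s 1) * ξ' s 0 * ξ' s 1) := by
        linarith
      have e1 : ξ'' s 1 = -((1 - R / ξ s 1) * (R / ξ s 1 ^ 2) / 2 * ξ' s 0 ^ 2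
          - R / ξ s 1 ^ 2 / (2 * (1 - R / ξ s 1)) * ξ' s 1 ^ 2
          - ξ s 1 * (1 - R / ξ s 1) * ξ' s 2 ^ 2
          - ξ s 1 * (1 - R / ξ s 1) * Real.sin (ξ s 2) ^ 2 * ξ' s 3 ^ 2) := by
        linarith
      have e2 : ξ'' s 2 = -(2 / ξ s 1 * ξ' s 1 * ξ' s 2
          - Real.sin (ξ s 2) * Real.cos (ξ s 2) * ξ' s 3 ^ 2) := by
        linarith
      have e3 : ξ'' s 3 = -(2 / ξ s 1 * ξ' s 1 * ξ' s 3
          + 2 * Real.cos (ξ s 2) / Real.sin (ξ s 2) * ξ' s 2 * ξ' s 3) := by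
        linarith
      refine H.congr_deriv ?_
      simp only [Pi.pow_apply, Pi.sub_apply, Pi.div_apply, Pi.inv_apply, Pi.add_apply,
        Pi.mul_apply, Function.comp_apply]
      rw [e0, e1, e2, e3]
      field_simp
      ring
    have hconv : Convex ℝ I := convex_iff_ordConnected.2 hI
    intro s hs s' hs'
    have hle := hconv.norm_image_sub_le_of_norm_hasDerivWithin_le
      (f := q) (f' := fun _ => (0:ℝ)) (C := 0) (fun x hx => key x hx)
      (fun x hx => by simp) hs' hs
    have : q s = q s' := by
      rw [← sub_eq_zero]
      have := hle
      simp at this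
      rw [sub_eq_zero]
      linarith [abs_nonneg (q s - q s'), this]
    simpa [hqdef] using this
  · -- second part: purely algebraic
    intro hq1 s hs
    obtain ⟨hrR, hφ0, hφπ⟩ := hmem s hs
    have hr0 : (0:ℝ) < ξ s 1 := hR.trans hrR
    have hrne : ξ s 1 ≠ 0 := ne_of_gt hr0
    have hf : 1 - R / ξ s 1 ≠ 0 := by
      have : 0 < 1 - R / ξ s 1 := by
        rw [sub_pos]
        exact (div_lt_one hr0).2 hrR
      exact ne_of_gt this
    have hx : (0:ℝ) ≤ ξ' s 2 ^ 2 + Real.sin (ξ s 2) ^ 2 * ξ' s 3 ^ 2 := by positivity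
    have h := hq1 s hs
    have hs2 : (ξ s 1 ^ 2 * Real.sqrt (ξ' s 2 ^ 2 + Real.sin (ξ s 2) ^ 2 * ξ' s 3 ^ 2)) ^ 2
        = ξ s 1 ^ 4 * (ξ' s 2 ^ 2 + Real.sin (ξ s 2) ^ 2 * ξ' s 3 ^ 2) := by
      rw [mul_pow, Real.sq_sqrt hx]
      ring
    have hv : (1 - R / ξ s 1)⁻¹ * ξ' s 1 ^ 2
        = (1 - R / ξ s 1) * ξ' s 0 ^ 2
          - ξ s 1 ^ 2 * (ξ' s 2 ^ 2 + Real.sin (ξ s 2) ^ 2 * ξ' s 3 ^ 2) - 1 := by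
      linarith [h]
    have hkey : ξ' s 1 ^ 2 = (1 - R / ξ s 1) * ((1 - R / ξ s 1) * ξ' s 0 ^ 2
        - ξ s 1 ^ 2 * (ξ' s 2 ^ 2 + Real.sin (ξ s 2) ^ 2 * ξ' s 3 ^ 2) - 1) := by
      rw [← hv, ← mul_assoc, mul_inv_cancel₀ hf, one_mul]
    rw [hkey, hs2]
    field_simp
    ring
end
end
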